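/- arXiv:2106.06457 — 6 statements merged into one kernel-verified Lean document; each statement's English description precedes it below -/
import Mathlib

section
/- Lemma 1 (Expected number of hits). In the discrete-time caching model with equal-size objects, for every non-anticipative caching policy (C_k) and every K ≥ 1, E[∑_{k=1}^K 1(R_k ∈ C^HR_k)] ≥ E[∑_{k=1}^K 1(R_k ∈ C_k)]; that is, the expected number of hits in the first K requests under the HR-E rule is at least the expected number of hits under any non-anticipative policy. -/
open MeasureTheory

/-- If `T` contains the `|T|` largest values of `f` and `|S| = |T|` then the sum of `f`
over `S` is at most the sum over `T`. -/
lemma hr_sum_top_le {n : ℕ} (f : Fin n → ℝ) (S T : Finset (Fin n)) (hcard : S.card = T.card)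
    (htop : ∀ i ∈ T, ∀ j ∉ T, f j ≤ f i) : ∑ i ∈ S, f i ≤ ∑ i ∈ T, f i := by
  have hST : (S \ T).card = (T \ S).card := Finset.card_sdiff_comm hcard
  have h1 : ∑ i ∈ S ∩ T, f i + ∑ i ∈ S \ T, f i = ∑ i ∈ S, f i :=
    Finset.sum_inter_add_sum_sdiff S T f
  have h2 : ∑ i ∈ T ∩ S, f i + ∑ i ∈ T \ S, f i = ∑ i ∈ T, f i :=
    Finset.sum_inter_add_sum_sdiff T S f
  rw [← h1, ← h2, Finset.inter_comm]
  refine add_le_add_right ?_ _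
  rcases Finset.eq_empty_or_nonempty (T \ S) with h | hne
  · have : (S \ T) = ∅ := Finset.card_eq_zero.mp (by rw [hST, h, Finset.card_empty])
    simp [this, h]
  · set m := (T \ S).inf' hne f with hm
    have hstep1 : ∑ i ∈ S \ T, f i ≤ (S \ T).card • m := by
      refine Finset.sum_le_card_nsmul _ _ _ ?_
      intro j hj
      have hjT : j ∉ T := (Finset.mem_sdiff.mp hj).2
      exact Finset.le_inf' hne f (fun i hi => htop i (Finset.mem_sdiff.mp hi).1 j hjT)
    have hstep2 : (T \ S).card • m ≤ ∑ i ∈ T \ S, f i :=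
      Finset.card_nsmul_le_sum _ _ _ (fun i hi => Finset.inf'_le f hi)
    calc ∑ i ∈ S \ T, f i ≤ (S \ T).card • m := hstep1
      _ = (T \ S).card • m := by rw [hST]
      _ ≤ ∑ i ∈ T \ S, f i := hstep2

lemma hr_integrable_of_bound {Ω : Type*} {𝒜 : MeasurableSpace Ω} (μ : Measure Ω)
    [IsProbabilityMeasure μ] (f : Ω → ℝ) (hf : Measurable[𝒜] f) (c : ℝ)
    (h : ∀ ω, |f ω| ≤ c) : Integrable f μ :=
  (integrable_const c).mono' hf.aestronglyMeasurable (ae_of_all _ (by simpa using h))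

/-- Lemma 1 (Expected number of hits): in the discrete-time equal-size caching model,
the HR-E rule maximizes the expected number of hits in the first `K` requests among
all non-anticipative caching policies. -/
theorem hr_expected_hits
    {Ω : Type*} {𝒜 : MeasurableSpace Ω} (μ : Measure Ω) [IsProbabilityMeasure μ]
    -- the filtration
    (ℱ : ℕ → MeasurableSpace Ω) (hℱ_le : ∀ k, ℱ k ≤ 𝒜) (hℱ_mono : Monotone ℱ)
    -- objects and cache capacity
    (n B : ℕ) (hB : B ≤ n)
    -- the request process
    (R : ℕ → Ω → Fin n) (hR : ∀ k, Measurable[ℱ k] (R k))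
    -- the conditional request probabilities (normalized hazard rates)
    (p : ℕ → Ω → Fin n → ℝ)
    (hp_meas : ∀ k, 1 ≤ k → Measurable[ℱ (k - 1)] (p k))
    (hp_nonneg : ∀ k ω i, 0 ≤ p k ω i)
    (hp_sum : ∀ k ω, ∑ i, p k ω i = 1)
    (hp_cond : ∀ k, 1 ≤ k → ∀ i : Fin n,
      μ[(fun ω => if R k ω = i then (1 : ℝ) else 0) | ℱ (k - 1)]
        =ᵐ[μ] fun ω => p k ω i)
    -- an arbitrary non-anticipative caching policy
    (C : ℕ → Ω → Finset (Fin n))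
    (hC_meas : ∀ k, 1 ≤ k → ∀ i : Fin n, MeasurableSet[ℱ (k - 1)] {ω | i ∈ C k ω})
    (hC_card : ∀ k ω, (C k ω).card = B)
    -- the HR-E rule: a non-anticipative policy caching the B largest hazard rates
    (CHR : ℕ → Ω → Finset (Fin n))
    (hCHR_meas : ∀ k, 1 ≤ k → ∀ i : Fin n, MeasurableSet[ℱ (k - 1)] {ω | i ∈ CHR k ω})
    (hCHR_card : ∀ k ω, (CHR k ω).card = B)
    (hCHR_top : ∀ k ω, ∀ i ∈ CHR k ω, ∀ j ∉ CHR k ω, p k ω j ≤ p k ω i)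
    (K : ℕ) (hK : 1 ≤ K) :
    ∫ ω, (∑ k ∈ Finset.Icc 1 K, if R k ω ∈ C k ω then (1 : ℝ) else 0) ∂μ
      ≤ ∫ ω, (∑ k ∈ Finset.Icc 1 K, if R k ω ∈ CHR k ω then (1 : ℝ) else 0) ∂μ := by
  have hRa : ∀ k, Measurable[𝒜] (R k) := fun k => (hR k).mono (hℱ_le k) le_rfl
  have hp_le : ∀ k ω i, |p k ω i| ≤ 1 := by
    intro k ω i
    rw [abs_of_nonneg (hp_nonneg k ω i), ← hp_sum k ω]
    exact Finset.single_le_sum (fun j _ => hp_nonneg k ω j) (Finset.mem_univ i)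
  -- integrability of hit indicators and cached masses
  have hit_int : ∀ (D : ℕ → Ω → Finset (Fin n)),
      (∀ k, 1 ≤ k → ∀ i : Fin n, MeasurableSet[ℱ (k - 1)] {ω | i ∈ D k ω}) →
      ∀ k, 1 ≤ k → Integrable (fun ω => if R k ω ∈ D k ω then (1 : ℝ) else 0) μ := by
    intro D hD k hk
    have hs : MeasurableSet[𝒜] {ω | R k ω ∈ D k ω} := by
      have : {ω | R k ω ∈ D k ω} = ⋃ i : Fin n, ({ω | R k ω = i} ∩ {ω | i ∈ D k ω}) := by
        ext ω; simp only [Set.mem_setOf_eq, Set.mem_iUnion, Set.mem_inter_iff]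
        exact ⟨fun h => ⟨R k ω, rfl, h⟩, fun ⟨i, h1, h2⟩ => h1 ▸ h2⟩
      rw [this]
      exact MeasurableSet.iUnion (fun i =>
        ((hRa k) (measurableSet_singleton i)).inter (hℱ_le (k - 1) _ (hD k hk i)))
    refine hr_integrable_of_bound μ _ ?_ 1 (fun ω => by split <;> simp)
    exact Measurable.ite hs measurable_const measurable_const
  have mass_int : ∀ (D : ℕ → Ω → Finset (Fin n)),
      (∀ k, 1 ≤ k → ∀ i : Fin n, MeasurableSet[ℱ (k - 1)] {ω | i ∈ D k ω}) →
      ∀ k, 1 ≤ k → Integrable (fun ω => ∑ i ∈ D k ω, p k ω i) μ := by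
    intro D hD k hk
    have hmeas : Measurable[𝒜] (fun ω => ∑ i ∈ D k ω, p k ω i) := by
      have heq : (fun ω => ∑ i ∈ D k ω, p k ω i)
          = fun ω => ∑ i : Fin n, if i ∈ D k ω then p k ω i else 0 := by
        funext ω; rw [Finset.sum_ite_mem, Finset.univ_inter]
      rw [heq]
      refine Finset.measurable_sum _ (fun i _ => ?_)
      exact Measurable.ite (hℱ_le (k - 1) _ (hD k hk i))
        (((measurable_pi_apply i).comp (hp_meas k hk)).mono (hℱ_le (k - 1)) le_rfl)
        measurable_const
    refine hr_integrable_of_bound μ _ hmeas 1 (fun ω => ?_)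
    have h0 : 0 ≤ ∑ i ∈ D k ω, p k ω i :=
      Finset.sum_nonneg (fun i _ => hp_nonneg k ω i)
    rw [abs_of_nonneg h0, ← hp_sum k ω]
    exact Finset.sum_le_sum_of_subset_of_nonneg (Finset.subset_univ _)
      (fun i _ _ => hp_nonneg k ω i)
  -- per-step identities
  have per_k : ∀ (D : ℕ → Ω → Finset (Fin n)),
      (∀ k, 1 ≤ k → ∀ i : Fin n, MeasurableSet[ℱ (k - 1)] {ω | i ∈ D k ω}) →
      ∀ k, 1 ≤ k →
      ∫ ω, (if R k ω ∈ D k ω then (1 : ℝ) else 0) ∂μ = ∫ ω, ∑ i ∈ D k ω, p k ω i ∂μ := by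
    intro D hD k hk
    have hCa : ∀ i : Fin n, MeasurableSet[𝒜] {ω | i ∈ D k ω} :=
      fun i => hℱ_le (k - 1) _ (hD k hk i)
    have hpm : ∀ i : Fin n, Measurable[𝒜] (fun ω => p k ω i) :=
      fun i => ((measurable_pi_apply i).comp (hp_meas k hk)).mono (hℱ_le (k - 1)) le_rfl
    have key1 : ∀ ω, (if R k ω ∈ D k ω then (1 : ℝ) else 0)
        = ∑ i : Fin n,
            Set.indicator {ω' | i ∈ D k ω'} (fun ω' => if R k ω' = i then (1 : ℝ) else 0) ω := by
      intro ω
      have h : ∀ i : Fin n,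
          Set.indicator {ω' | i ∈ D k ω'} (fun ω' => if R k ω' = i then (1 : ℝ) else 0) ω
          = if R k ω = i then (if i ∈ D k ω then (1 : ℝ) else 0) else 0 := by
        intro i
        simp only [Set.indicator_apply, Set.mem_setOf_eq]
        by_cases h1 : R k ω = i <;> by_cases h2 : i ∈ D k ω <;> simp [h1, h2]
      simp only [h, Finset.sum_ite_eq, Finset.mem_univ, if_true]
    have key2 : ∀ ω, (∑ i ∈ D k ω, p k ω i)
        = ∑ i : Fin n, Set.indicator {ω' | i ∈ D k ω'} (fun ω' => p k ω' i) ω := by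
      intro ω
      have h : ∀ i : Fin n, Set.indicator {ω' | i ∈ D k ω'} (fun ω' => p k ω' i) ω
          = if i ∈ D k ω then p k ω i else 0 := by
        intro i; simp [Set.indicator_apply]
      simp only [h, Finset.sum_ite_mem, Finset.univ_inter]
    have hRi_meas : ∀ i : Fin n, Measurable[𝒜] (fun ω => if R k ω = i then (1 : ℝ) else 0) :=
      fun i => Measurable.ite ((hRa k) (measurableSet_singleton i))
        measurable_const measurable_const
    have hRi_int : ∀ i : Fin n, Integrable (fun ω => if R k ω = i then (1 : ℝ) else 0) μ :=
      fun i => hr_integrable_of_bound μ _ (hRi_meas i) 1 (fun ω => by split <;> simp)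
    have hind_int : ∀ i : Fin n, Integrable
        (Set.indicator {ω' | i ∈ D k ω'} (fun ω' => if R k ω' = i then (1 : ℝ) else 0)) μ :=
      fun i => ((hRi_int i).indicator (hCa i))
    have hp_int : ∀ i : Fin n, Integrable (fun ω => p k ω i) μ :=
      fun i => hr_integrable_of_bound μ _ (hpm i) 1 (fun ω => hp_le k ω i)
    have hpind_int : ∀ i : Fin n, Integrable
        (Set.indicator {ω' | i ∈ D k ω'} (fun ω' => p k ω' i)) μ :=
      fun i => (hp_int i).indicator (hCa i)
    calc ∫ ω, (if R k ω ∈ D k ω then (1 : ℝ) else 0) ∂μ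
        = ∫ ω, ∑ i : Fin n,
            Set.indicator {ω' | i ∈ D k ω'} (fun ω' => if R k ω' = i then (1 : ℝ) else 0) ω ∂μ :=
          integral_congr_ae (ae_of_all _ key1)
      _ = ∑ i : Fin n, ∫ ω,
            Set.indicator {ω' | i ∈ D k ω'} (fun ω' => if R k ω' = i then (1 : ℝ) else 0) ω ∂μ :=
          integral_finset_sum _ (fun i _ => hind_int i)
      _ = ∑ i : Fin n, ∫ ω,
            Set.indicator {ω' | i ∈ D k ω'} (fun ω' => p k ω' i) ω ∂μ := by
          refine Finset.sum_congr rfl (fun i _ => ?_)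
          rw [integral_indicator (hCa i), integral_indicator (hCa i),
            ← setIntegral_condExp (hℱ_le (k - 1)) (hRi_int i) (hD k hk i)]
          refine setIntegral_congr_ae (hCa i) ?_
          filter_upwards [hp_cond k hk i] with ω hω _ using hω
      _ = ∫ ω, ∑ i : Fin n, Set.indicator {ω' | i ∈ D k ω'} (fun ω' => p k ω' i) ω ∂μ :=
          (integral_finset_sum _ (fun i _ => hpind_int i)).symm
      _ = ∫ ω, ∑ i ∈ D k ω, p k ω i ∂μ :=
          integral_congr_ae (ae_of_all _ (fun ω => (key2 ω).symm))
  calc ∫ ω, (∑ k ∈ Finset.Icc 1 K, if R k ω ∈ C k ω then (1 : ℝ) else 0) ∂μ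
      = ∑ k ∈ Finset.Icc 1 K, ∫ ω, (if R k ω ∈ C k ω then (1 : ℝ) else 0) ∂μ :=
        integral_finset_sum _ (fun k hk => hit_int C hC_meas k (Finset.mem_Icc.mp hk).1)
    _ = ∑ k ∈ Finset.Icc 1 K, ∫ ω, ∑ i ∈ C k ω, p k ω i ∂μ :=
        Finset.sum_congr rfl (fun k hk => per_k C hC_meas k (Finset.mem_Icc.mp hk).1)
    _ ≤ ∑ k ∈ Finset.Icc 1 K, ∫ ω, ∑ i ∈ CHR k ω, p k ω i ∂μ := by
        refine Finset.sum_le_sum (fun k hk => ?_)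
        have hk1 := (Finset.mem_Icc.mp hk).1
        refine integral_mono (mass_int C hC_meas k hk1) (mass_int CHR hCHR_meas k hk1) ?_
        intro ω
        exact hr_sum_top_le (p k ω) (C k ω) (CHR k ω)
          (by rw [hC_card k ω, hCHR_card k ω]) (hCHR_top k ω)
    _ = ∑ k ∈ Finset.Icc 1 K, ∫ ω, (if R k ω ∈ CHR k ω then (1 : ℝ) else 0) ∂μ :=
        Finset.sum_congr rfl (fun k hk => (per_k CHR hCHR_meas k (Finset.mem_Icc.mp hk).1).symm)
    _ = ∫ ω, (∑ k ∈ Finset.Icc 1 K, if R k ω ∈ CHR k ω then (1 : ℝ) else 0) ∂μ :=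
        (integral_finset_sum _ (fun k hk => hit_int CHR hCHR_meas k (Finset.mem_Icc.mp hk).1)).symm
end

section
/- Theorem (Stationary hit probability). In the discrete-time caching model with equal-size objects, let (C_k) be any non-anticipative caching policy and (C^HR_k) an HR-E rule. If there exist real constants h^π and h^HR such that (1/K)·∑_{k=1}^K 1(R_k ∈ C_k) → h^π μ-almost everywhere and (1/K)·∑_{k=1}^K 1(R_k ∈ C^HR_k) → h^HR μ-almost everywhere as K → ∞, then h^HR ≥ h^π. -/
open MeasureTheory Filter Topology

lemma top_sum_le' {α : Type*} [DecidableEq α] (S T : Finset α) (f : α → ℝ)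
    (hcard : S.card = T.card)
    (htop : ∀ i ∈ T, ∀ j ∉ T, f j ≤ f i) :
    ∑ i ∈ S, f i ≤ ∑ i ∈ T, f i := by
  have h1 : (S \ T).card = (T \ S).card := by
    have a := Finset.card_sdiff_add_card_inter S T
    have b := Finset.card_sdiff_add_card_inter T S
    rw [Finset.inter_comm] at b
    omega
  have key : ∑ i ∈ S \ T, f i ≤ ∑ i ∈ T \ S, f i := by
    have e := Finset.equivOfCardEq h1
    calc ∑ i ∈ S \ T, f i = ∑ x : (S \ T : Finset α), f x := (Finset.sum_coe_sort _ f).symm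
    _ ≤ ∑ x : (S \ T : Finset α), f (e x) := by
        apply Finset.sum_le_sum
        intro x _
        exact htop _ (Finset.mem_sdiff.mp (e x).2).1 _ (Finset.mem_sdiff.mp x.2).2
    _ = ∑ y : (T \ S : Finset α), f y := Equiv.sum_comp e (fun y => f y)
    _ = ∑ i ∈ T \ S, f i := Finset.sum_coe_sort _ f
  have hS := Finset.sum_inter_add_sum_sdiff S T f
  have hT := Finset.sum_inter_add_sum_sdiff T S f
  rw [Finset.inter_comm] at hT
  linarith


/-- Theorem (Stationary hit probability): if the almost-sure Cesàro hit frequencies of a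
non-anticipative policy and of the HR-E rule exist, then the latter is at least the former. -/
theorem hr_stationary_hit_probability
    {Ω : Type*} {𝒜 : MeasurableSpace Ω} (μ : Measure Ω) [IsProbabilityMeasure μ]
    (ℱ : ℕ → MeasurableSpace Ω) (hℱ_le : ∀ k, ℱ k ≤ 𝒜) (hℱ_mono : Monotone ℱ)
    (n B : ℕ) (hB : B ≤ n)
    (R : ℕ → Ω → Fin n) (hR : ∀ k, Measurable[ℱ k] (R k))
    (p : ℕ → Ω → Fin n → ℝ)
    (hp_meas : ∀ k, 1 ≤ k → Measurable[ℱ (k - 1)] (p k))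
    (hp_nonneg : ∀ k ω i, 0 ≤ p k ω i)
    (hp_sum : ∀ k ω, ∑ i, p k ω i = 1)
    (hp_cond : ∀ k, 1 ≤ k → ∀ i : Fin n,
      μ[(fun ω => if R k ω = i then (1 : ℝ) else 0) | ℱ (k - 1)]
        =ᵐ[μ] fun ω => p k ω i)
    -- an arbitrary non-anticipative caching policy
    (C : ℕ → Ω → Finset (Fin n))
    (hC_meas : ∀ k, 1 ≤ k → ∀ i : Fin n, MeasurableSet[ℱ (k - 1)] {ω | i ∈ C k ω})
    (hC_card : ∀ k ω, (C k ω).card = B)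
    -- the HR-E rule
    (CHR : ℕ → Ω → Finset (Fin n))
    (hCHR_meas : ∀ k, 1 ≤ k → ∀ i : Fin n, MeasurableSet[ℱ (k - 1)] {ω | i ∈ CHR k ω})
    (hCHR_card : ∀ k ω, (CHR k ω).card = B)
    (hCHR_top : ∀ k ω, ∀ i ∈ CHR k ω, ∀ j ∉ CHR k ω, p k ω j ≤ p k ω i)
    -- existence of the almost-sure Cesàro limits (stationary hit probabilities)
    (hπ hHR : ℝ)
    (hπ_lim : ∀ᵐ ω ∂μ, Tendsto
      (fun K : ℕ => (K : ℝ)⁻¹ * ∑ k ∈ Finset.Icc 1 K, if R k ω ∈ C k ω then (1 : ℝ) else 0)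
      atTop (𝓝 hπ))
    (hHR_lim : ∀ᵐ ω ∂μ, Tendsto
      (fun K : ℕ => (K : ℝ)⁻¹ * ∑ k ∈ Finset.Icc 1 K, if R k ω ∈ CHR k ω then (1 : ℝ) else 0)
      atTop (𝓝 hHR)) :
    hπ ≤ hHR := by
  classical
  -- measurability of p components
  have hp_meas' : ∀ k, 1 ≤ k → ∀ i, Measurable (fun ω => p k ω i) := fun k hk i =>
    ((measurable_pi_apply i).comp (hp_meas k hk)).mono (hℱ_le (k-1)) le_rfl
  have hp_le_one : ∀ k ω i, p k ω i ≤ 1 := by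
    intro k ω i
    calc p k ω i ≤ ∑ j, p k ω j :=
      Finset.single_le_sum (fun j _ => hp_nonneg k ω j) (Finset.mem_univ i)
    _ = 1 := hp_sum k ω
  have hp_int : ∀ k, 1 ≤ k → ∀ i, Integrable (fun ω => p k ω i) μ := by
    intro k hk i
    refine (integrable_const (1:ℝ)).mono' (hp_meas' k hk i).aestronglyMeasurable ?_
    exact Eventually.of_forall fun ω => by
      rw [Real.norm_eq_abs, abs_of_nonneg (hp_nonneg k ω i)]; exact hp_le_one k ω i
  -- generic per-policy facts
  have main : ∀ (D : ℕ → Ω → Finset (Fin n)),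
      (∀ k, 1 ≤ k → ∀ i, MeasurableSet[ℱ (k-1)] {ω | i ∈ D k ω}) →
      ∀ k, 1 ≤ k →
      (Integrable (fun ω => if R k ω ∈ D k ω then (1:ℝ) else 0) μ ∧
       Integrable (fun ω => ∑ i ∈ D k ω, p k ω i) μ ∧
       ∫ ω, (if R k ω ∈ D k ω then (1:ℝ) else 0) ∂μ
         = ∫ ω, ∑ i ∈ D k ω, p k ω i ∂μ) := by
    intro D hD k hk
    have hmle : ℱ (k-1) ≤ 𝒜 := hℱ_le (k-1)
    haveI : SigmaFinite (μ.trim hmle) := by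
      have : IsFiniteMeasure (μ.trim hmle) := isFiniteMeasure_trim hmle
      infer_instance
    -- sets
    have hAi : ∀ i : Fin n, MeasurableSet[𝒜] {ω | i ∈ D k ω} := fun i => hmle _ (hD k hk i)
    have hRi : ∀ i : Fin n, MeasurableSet[𝒜] {ω | R k ω = i} := fun i =>
      ((hR k).mono (hℱ_le k) le_rfl) (measurableSet_singleton i)
    -- the hit indicator as a finite sum
    have point : ∀ ω, (if R k ω ∈ D k ω then (1:ℝ) else 0)
        = ∑ i : Fin n, Set.indicator {ω' | i ∈ D k ω'}
            (fun ω' => if R k ω' = i then (1:ℝ) else 0) ω := by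
      intro ω
      have : ∀ i : Fin n, Set.indicator {ω' | i ∈ D k ω'}
            (fun ω' => if R k ω' = i then (1:ℝ) else 0) ω
          = (if R k ω = i then (if i ∈ D k ω then (1:ℝ) else 0) else 0) := by
        intro i
        simp only [Set.indicator_apply, Set.mem_setOf_eq]
        by_cases h1 : i ∈ D k ω <;> by_cases h2 : R k ω = i <;> simp [h1, h2]
      rw [Finset.sum_congr rfl (fun i _ => this i), Finset.sum_ite_eq]
      simp
    -- integrability of each summand
    have h_ite_int : ∀ i : Fin n,
        Integrable (fun ω => if R k ω = i then (1:ℝ) else 0) μ := by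
      intro i
      have := (integrable_const (1:ℝ)).indicator (μ := μ) (hRi i)
      exact this.congr (Eventually.of_forall fun ω => by
        simp [Set.indicator_apply, Set.mem_setOf_eq])
    have h_sum_int : ∀ i : Fin n,
        Integrable (Set.indicator {ω' | i ∈ D k ω'}
          (fun ω' => if R k ω' = i then (1:ℝ) else 0)) μ :=
      fun i => (h_ite_int i).indicator (hAi i)
    have h_p_ind_int : ∀ i : Fin n,
        Integrable (Set.indicator {ω' | i ∈ D k ω'} (fun ω' => p k ω' i)) μ :=
      fun i => (hp_int k hk i).indicator (hAi i)
    -- pointwise form of the p-sum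
    have pointp : ∀ ω, (∑ i ∈ D k ω, p k ω i)
        = ∑ i : Fin n, Set.indicator {ω' | i ∈ D k ω'} (fun ω' => p k ω' i) ω := by
      intro ω
      have : ∀ i : Fin n, Set.indicator {ω' | i ∈ D k ω'} (fun ω' => p k ω' i) ω
          = (if i ∈ D k ω then p k ω i else 0) := by
        intro i; simp [Set.indicator_apply]
      rw [Finset.sum_congr rfl (fun i _ => this i), Finset.sum_ite_mem, Finset.univ_inter]
    constructor
    · have : Integrable (fun ω => ∑ i : Fin n, Set.indicator {ω' | i ∈ D k ω'}
            (fun ω' => if R k ω' = i then (1:ℝ) else 0) ω) μ :=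
        integrable_finset_sum _ (fun i _ => h_sum_int i)
      exact this.congr (Eventually.of_forall fun ω => (point ω).symm)
    constructor
    · have : Integrable (fun ω => ∑ i : Fin n, Set.indicator {ω' | i ∈ D k ω'}
            (fun ω' => p k ω' i) ω) μ :=
        integrable_finset_sum _ (fun i _ => h_p_ind_int i)
      exact this.congr (Eventually.of_forall fun ω => (pointp ω).symm)
    · -- the key integral identity
      have term : ∀ i : Fin n,
          ∫ ω, Set.indicator {ω' | i ∈ D k ω'}
            (fun ω' => if R k ω' = i then (1:ℝ) else 0) ω ∂μ
          = ∫ ω, Set.indicator {ω' | i ∈ D k ω'} (fun ω' => p k ω' i) ω ∂μ := by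
        intro i
        rw [integral_indicator (hAi i), integral_indicator (hAi i)]
        have h1 : ∫ ω in {ω' | i ∈ D k ω'},
            (μ[(fun ω => if R k ω = i then (1:ℝ) else 0) | ℱ (k-1)]) ω ∂μ
            = ∫ ω in {ω' | i ∈ D k ω'}, (if R k ω = i then (1:ℝ) else 0) ∂μ :=
          setIntegral_condExp hmle (h_ite_int i) (hD k hk i)
        have h2 : ∫ ω in {ω' | i ∈ D k ω'},
            (μ[(fun ω => if R k ω = i then (1:ℝ) else 0) | ℱ (k-1)]) ω ∂μ
            = ∫ ω in {ω' | i ∈ D k ω'}, p k ω i ∂μ :=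
          setIntegral_congr_ae (hAi i)
            ((hp_cond k hk i).mono fun ω h _ => h)
        rw [← h1, h2]
      calc ∫ ω, (if R k ω ∈ D k ω then (1:ℝ) else 0) ∂μ
          = ∫ ω, ∑ i : Fin n, Set.indicator {ω' | i ∈ D k ω'}
              (fun ω' => if R k ω' = i then (1:ℝ) else 0) ω ∂μ :=
            integral_congr_ae (Eventually.of_forall point)
        _ = ∑ i : Fin n, ∫ ω, Set.indicator {ω' | i ∈ D k ω'}
              (fun ω' => if R k ω' = i then (1:ℝ) else 0) ω ∂μ :=
            integral_finset_sum _ (fun i _ => h_sum_int i)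
        _ = ∑ i : Fin n, ∫ ω, Set.indicator {ω' | i ∈ D k ω'}
              (fun ω' => p k ω' i) ω ∂μ := Finset.sum_congr rfl (fun i _ => term i)
        _ = ∫ ω, ∑ i : Fin n, Set.indicator {ω' | i ∈ D k ω'}
              (fun ω' => p k ω' i) ω ∂μ :=
            (integral_finset_sum _ (fun i _ => h_p_ind_int i)).symm
        _ = ∫ ω, ∑ i ∈ D k ω, p k ω i ∂μ :=
            integral_congr_ae (Eventually.of_forall fun ω => (pointp ω).symm)
  -- per-step comparison of integrals
  have step : ∀ k, 1 ≤ k →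
      ∫ ω, (if R k ω ∈ C k ω then (1:ℝ) else 0) ∂μ
        ≤ ∫ ω, (if R k ω ∈ CHR k ω then (1:ℝ) else 0) ∂μ := by
    intro k hk
    obtain ⟨_, hgC_int, hC_eq⟩ := main C hC_meas k hk
    obtain ⟨_, hgHR_int, hHR_eq⟩ := main CHR hCHR_meas k hk
    rw [hC_eq, hHR_eq]
    apply integral_mono hgC_int hgHR_int
    intro ω
    exact top_sum_le' (C k ω) (CHR k ω) (p k ω)
      (by rw [hC_card k ω, hCHR_card k ω]) (hCHR_top k ω)
  -- average comparison
  have avg_le : ∀ K : ℕ,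
      ∫ ω, (K : ℝ)⁻¹ * ∑ k ∈ Finset.Icc 1 K, (if R k ω ∈ C k ω then (1:ℝ) else 0) ∂μ
      ≤ ∫ ω, (K : ℝ)⁻¹ * ∑ k ∈ Finset.Icc 1 K, (if R k ω ∈ CHR k ω then (1:ℝ) else 0) ∂μ := by
    intro K
    rw [integral_const_mul, integral_const_mul,
      integral_finset_sum _ (fun k hkm => (main C hC_meas k (Finset.mem_Icc.mp hkm).1).1),
      integral_finset_sum _ (fun k hkm => (main CHR hCHR_meas k (Finset.mem_Icc.mp hkm).1).1)]
    apply mul_le_mul_of_nonneg_left _ (by positivity)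
    exact Finset.sum_le_sum fun k hkm => step k (Finset.mem_Icc.mp hkm).1
  -- DCT for both
  have hbound : ∀ (D : ℕ → Ω → Finset (Fin n)) (K : ℕ) (ω : Ω),
      ‖(K : ℝ)⁻¹ * ∑ k ∈ Finset.Icc 1 K, (if R k ω ∈ D k ω then (1:ℝ) else 0)‖ ≤ 1 := by
    intro D K ω
    rw [Real.norm_eq_abs, abs_mul, abs_inv, Nat.abs_cast]
    have h1 : |∑ k ∈ Finset.Icc 1 K, (if R k ω ∈ D k ω then (1:ℝ) else 0)| ≤ K := by
      calc |∑ k ∈ Finset.Icc 1 K, (if R k ω ∈ D k ω then (1:ℝ) else 0)|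
          ≤ ∑ k ∈ Finset.Icc 1 K, |if R k ω ∈ D k ω then (1:ℝ) else 0| :=
            Finset.abs_sum_le_sum_abs _ _
        _ ≤ ∑ k ∈ Finset.Icc 1 K, 1 := Finset.sum_le_sum fun k _ => by
            by_cases h : R k ω ∈ D k ω <;> simp [h]
        _ = ((Finset.Icc 1 K).card : ℝ) := by simp
        _ ≤ K := by simp [Nat.card_Icc]
    rcases Nat.eq_zero_or_pos K with h | h
    · simp [h]
    · have hK : (0:ℝ) < K := by exact_mod_cast h
      calc ((K:ℝ))⁻¹ * |∑ k ∈ Finset.Icc 1 K, (if R k ω ∈ D k ω then (1:ℝ) else 0)|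
          ≤ (K:ℝ)⁻¹ * K := by
            apply mul_le_mul_of_nonneg_left h1 (by positivity)
        _ = 1 := inv_mul_cancel₀ (ne_of_gt hK)
  have hmeasD : ∀ (D : ℕ → Ω → Finset (Fin n)),
      (∀ k, 1 ≤ k → ∀ i, MeasurableSet[ℱ (k-1)] {ω | i ∈ D k ω}) →
      ∀ K : ℕ, AEStronglyMeasurable
        (fun ω => (K : ℝ)⁻¹ * ∑ k ∈ Finset.Icc 1 K, (if R k ω ∈ D k ω then (1:ℝ) else 0)) μ := by
    intro D hD K
    apply AEStronglyMeasurable.const_mul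
    exact (integrable_finset_sum _ (fun k hkm =>
      (main D hD k (Finset.mem_Icc.mp hkm).1).1)).aestronglyMeasurable
  have tC : Tendsto (fun K : ℕ =>
      ∫ ω, (K : ℝ)⁻¹ * ∑ k ∈ Finset.Icc 1 K, (if R k ω ∈ C k ω then (1:ℝ) else 0) ∂μ)
      atTop (𝓝 hπ) := by
    have := tendsto_integral_of_dominated_convergence (fun _ => (1:ℝ))
      (hmeasD C hC_meas) (integrable_const 1)
      (fun K => Eventually.of_forall fun ω => hbound C K ω) hπ_lim
    simpa using this
  have tHR : Tendsto (fun K : ℕ =>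
      ∫ ω, (K : ℝ)⁻¹ * ∑ k ∈ Finset.Icc 1 K, (if R k ω ∈ CHR k ω then (1:ℝ) else 0) ∂μ)
      atTop (𝓝 hHR) := by
    have := tendsto_integral_of_dominated_convergence (fun _ => (1:ℝ))
      (hmeasD CHR hCHR_meas) (integrable_const 1)
      (fun K => Eventually.of_forall fun ω => hbound CHR K ω) hHR_lim
    simpa using this
  exact le_of_tendsto_of_tendsto' tC tHR avg_le
end

section
/- Byte-hit dominance of HR-VB (Section 3.1). In the discrete-time caching model with variable-size objects, suppose (x^HR_k) is a fractional cache policy such that for μ-almost every ω and every k, x^HR_k(ω) maximizes ∑_{i} s_i y_i p_k(i)(ω) over all y : Fin n → ℝ with 0 ≤ y_i ≤ 1 and ∑_i s_i y_i ≤ B (i.e., for every such feasible y, ∑_i s_i y_i p_k(i)(ω) ≤ ∑_i s_i x^HR_k(i)(ω) p_k(i)(ω)). Then for every fractional cache policy (x_k) and every K ≥ 1, E[∑_{k=1}^K s_{R_k}·x^HR_k(R_k)] ≥ E[∑_{k=1}^K s_{R_k}·x_k(R_k)]; that is, HR-VB maximizes the expected number of bytes served from the cache among all non-anticipative fractional caching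 policies. -/
open MeasureTheory



/-- Auxiliary: integrate out a bounded indicator-like function against a bounded
`m`-measurable function, replacing it by its conditional expectation. -/
lemma hr_vb_aux_int {Ω : Type*} {𝒜 : MeasurableSpace Ω} (μ : Measure Ω)
    [IsProbabilityMeasure μ] {m : MeasurableSpace Ω} (hm : m ≤ 𝒜)
    (f g q : Ω → ℝ) (hf_meas : Measurable[𝒜] f) (hf_bd : ∀ ω, ‖f ω‖ ≤ 1)
    (hg : StronglyMeasurable[m] g) (C : ℝ) (hg_bd : ∀ ω, ‖g ω‖ ≤ C)
    (hq : μ[f|m] =ᵐ[μ] q) :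
    ∫ ω, g ω * f ω ∂μ = ∫ ω, g ω * q ω ∂μ := by
  have hf_int : Integrable f μ :=
    ⟨hf_meas.aestronglyMeasurable (μ := μ), HasFiniteIntegral.of_bounded (ae_of_all _ hf_bd)⟩
  have hfg_int : Integrable (g * f) μ := by
    refine ⟨(((hg.mono hm).aestronglyMeasurable (μ := μ)).mul (hf_meas.aestronglyMeasurable (μ := μ))),
      HasFiniteIntegral.of_bounded (C := C) (ae_of_all _ fun ω => ?_)⟩
    calc ‖g ω * f ω‖ = ‖g ω‖ * ‖f ω‖ := norm_mul _ _
      _ ≤ C * 1 := by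
          have h0 : (0:ℝ) ≤ ‖g ω‖ := norm_nonneg _
          exact mul_le_mul (hg_bd ω) (hf_bd ω) (norm_nonneg _) ((h0).trans (hg_bd ω))
      _ = C := mul_one C
  have h1 := condExp_mul_of_stronglyMeasurable_left hg hfg_int hf_int
  calc ∫ ω, g ω * f ω ∂μ = ∫ ω, (μ[g * f|m]) ω ∂μ := (integral_condExp hm).symm
    _ = ∫ ω, g ω * (μ[f|m]) ω ∂μ := integral_congr_ae h1
    _ = ∫ ω, g ω * q ω ∂μ := by
        refine integral_congr_ae ?_
        filter_upwards [hq] with ω hω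
        rw [hω]

lemma hr_vb_integrable_of_bdd {Ω : Type*} {𝒜 : MeasurableSpace Ω} (μ : Measure Ω)
    [IsProbabilityMeasure μ] (h : Ω → ℝ) (hm : Measurable[𝒜] h) (C : ℝ)
    (hb : ∀ ω, ‖h ω‖ ≤ C) : Integrable h μ :=
  ⟨hm.aestronglyMeasurable (μ := μ), HasFiniteIntegral.of_bounded (ae_of_all _ hb)⟩

/-- Byte-hit dominance of HR-VB (Section 3.1): a non-anticipative fractional caching policy
that pointwise maximizes the conditional expected bytes served `∑ i, s i * y i * p k ω i`
over the fractional knapsack polytope dominates every non-anticipative fractional caching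
policy in expected total bytes served from the cache. -/
theorem hr_vb_expected_bytes
    {Ω : Type*} {𝒜 : MeasurableSpace Ω} (μ : Measure Ω) [IsProbabilityMeasure μ]
    (ℱ : ℕ → MeasurableSpace Ω) (hℱ_le : ∀ k, ℱ k ≤ 𝒜) (hℱ_mono : Monotone ℱ)
    -- objects, sizes and cache capacity in bytes
    (n : ℕ) (s : Fin n → ℝ) (hs : ∀ i, 0 < s i) (B : ℝ) (hB : 0 < B)
    -- the request process
    (R : ℕ → Ω → Fin n) (hR : ∀ k, Measurable[ℱ k] (R k))
    -- the conditional request probabilities (normalized hazard rates)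
    (p : ℕ → Ω → Fin n → ℝ)
    (hp_meas : ∀ k, 1 ≤ k → Measurable[ℱ (k - 1)] (p k))
    (hp_nonneg : ∀ k ω i, 0 ≤ p k ω i)
    (hp_sum : ∀ k ω, ∑ i, p k ω i = 1)
    (hp_cond : ∀ k, 1 ≤ k → ∀ i : Fin n,
      μ[(fun ω => if R k ω = i then (1 : ℝ) else 0) | ℱ (k - 1)]
        =ᵐ[μ] fun ω => p k ω i)
    -- an arbitrary non-anticipative fractional caching policy
    (x : ℕ → Ω → Fin n → ℝ)
    (hx_meas : ∀ k, 1 ≤ k → Measurable[ℱ (k - 1)] (x k))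
    (hx01 : ∀ k ω i, 0 ≤ x k ω i ∧ x k ω i ≤ 1)
    (hx_cap : ∀ k ω, ∑ i, s i * x k ω i ≤ B)
    -- the HR-VB rule: a non-anticipative fractional policy maximizing the conditional
    -- expected number of bytes served at each request
    (xHR : ℕ → Ω → Fin n → ℝ)
    (hxHR_meas : ∀ k, 1 ≤ k → Measurable[ℱ (k - 1)] (xHR k))
    (hxHR01 : ∀ k ω i, 0 ≤ xHR k ω i ∧ xHR k ω i ≤ 1)
    (hxHR_cap : ∀ k ω, ∑ i, s i * xHR k ω i ≤ B)
    (hxHR_opt : ∀ k, 1 ≤ k → ∀ᵐ ω ∂μ, ∀ y : Fin n → ℝ,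
      (∀ i, 0 ≤ y i ∧ y i ≤ 1) → (∑ i, s i * y i ≤ B) →
      ∑ i, s i * y i * p k ω i ≤ ∑ i, s i * xHR k ω i * p k ω i)
    (K : ℕ) (hK : 1 ≤ K) :
    ∫ ω, (∑ k ∈ Finset.Icc 1 K, s (R k ω) * x k ω (R k ω)) ∂μ
      ≤ ∫ ω, (∑ k ∈ Finset.Icc 1 K, s (R k ω) * xHR k ω (R k ω)) ∂μ := by

  -- p is bounded by 1
  have hp_le_one : ∀ k ω i, p k ω i ≤ 1 := by
    intro k ω i
    have := Finset.single_le_sum (f := fun j => p k ω j)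
      (fun j _ => hp_nonneg k ω j) (Finset.mem_univ i)
    rw [hp_sum k ω] at this
    exact this
  -- pointwise expansion of bytes served via indicators
  have hexp : ∀ (z : ℕ → Ω → Fin n → ℝ) (k : ℕ) (ω : Ω),
      s (R k ω) * z k ω (R k ω)
        = ∑ i, (s i * z k ω i) * (if R k ω = i then (1:ℝ) else 0) := by
    intro z k ω
    simp [mul_ite]
  -- measurability of the indicator
  have hfmeas : ∀ (k : ℕ) (i : Fin n),
      Measurable[𝒜] (fun ω => if R k ω = i then (1:ℝ) else 0) := by
    intro k i
    have hRk : Measurable[𝒜] (R k) := (hR k).mono (hℱ_le k) le_rfl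
    exact Measurable.ite (hRk (measurableSet_singleton i)) measurable_const measurable_const
  -- general facts for any policy z
  have hgeneral : ∀ (z : ℕ → Ω → Fin n → ℝ),
      (∀ k, 1 ≤ k → Measurable[ℱ (k - 1)] (z k)) →
      (∀ k ω i, 0 ≤ z k ω i ∧ z k ω i ≤ 1) →
      ∀ k, 1 ≤ k →
        (∀ i : Fin n, Integrable (fun ω => (s i * z k ω i) * (if R k ω = i then (1:ℝ) else 0)) μ)
        ∧ (∀ i : Fin n, Integrable (fun ω => s i * z k ω i * p k ω i) μ)
        ∧ ∫ ω, (∑ i, (s i * z k ω i) * (if R k ω = i then (1:ℝ) else 0)) ∂μ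
            = ∫ ω, (∑ i, s i * z k ω i * p k ω i) ∂μ := by
    intro z hz_meas hz01 k hk
    have hgm : ∀ i : Fin n, StronglyMeasurable[ℱ (k - 1)] (fun ω => s i * z k ω i) :=
      fun i => (((measurable_pi_apply i).comp (hz_meas k hk)).const_mul (s i)).stronglyMeasurable
    have hgb : ∀ (i : Fin n) (ω : Ω), ‖s i * z k ω i‖ ≤ s i := by
      intro i ω
      have h1 := (hz01 k ω i).1
      have h2 := (hz01 k ω i).2
      have hsi := (hs i).le
      rw [Real.norm_eq_abs, abs_of_nonneg (by positivity)]
      nlinarith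
    have hfb : ∀ (i : Fin n) (ω : Ω), ‖(if R k ω = i then (1:ℝ) else 0)‖ ≤ 1 := by
      intro i ω; split <;> simp
    have hint1 : ∀ i : Fin n,
        Integrable (fun ω => (s i * z k ω i) * (if R k ω = i then (1:ℝ) else 0)) μ := by
      intro i
      refine hr_vb_integrable_of_bdd μ _
        (((hgm i).mono (hℱ_le _)).measurable.mul (hfmeas k i)) (s i) (fun ω => ?_)
      calc ‖(s i * z k ω i) * (if R k ω = i then (1:ℝ) else 0)‖
          = ‖s i * z k ω i‖ * ‖(if R k ω = i then (1:ℝ) else 0)‖ := norm_mul _ _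
        _ ≤ s i * 1 := mul_le_mul (hgb i ω) (hfb i ω) (norm_nonneg _) (hs i).le
        _ = s i := mul_one _
    have hint2 : ∀ i : Fin n, Integrable (fun ω => s i * z k ω i * p k ω i) μ := by
      intro i
      have hpm : Measurable[𝒜] (fun ω => p k ω i) :=
        ((measurable_pi_apply i).comp (hp_meas k hk)).mono (hℱ_le _) le_rfl
      refine hr_vb_integrable_of_bdd μ _
        (((hgm i).mono (hℱ_le _)).measurable.mul hpm) (s i) (fun ω => ?_)
      have hpb : ‖p k ω i‖ ≤ 1 := by
        rw [Real.norm_eq_abs, abs_of_nonneg (hp_nonneg k ω i)]; exact hp_le_one k ω i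
      calc ‖s i * z k ω i * p k ω i‖
          = ‖s i * z k ω i‖ * ‖p k ω i‖ := norm_mul _ _
        _ ≤ s i * 1 := mul_le_mul (hgb i ω) hpb (norm_nonneg _) (hs i).le
        _ = s i := mul_one _
    refine ⟨hint1, hint2, ?_⟩
    rw [integral_finset_sum _ (fun i _ => hint1 i), integral_finset_sum _ (fun i _ => hint2 i)]
    refine Finset.sum_congr rfl fun i _ => ?_
    exact hr_vb_aux_int μ (hℱ_le (k - 1)) _ _ _ (hfmeas k i) (hfb i) (hgm i) (s i) (hgb i)
      (hp_cond k hk i)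
  -- rewrite both sides using the indicator expansion
  have hrw : ∀ (z : ℕ → Ω → Fin n → ℝ),
      (fun ω => ∑ k ∈ Finset.Icc 1 K, s (R k ω) * z k ω (R k ω))
        = fun ω => ∑ k ∈ Finset.Icc 1 K, ∑ i, (s i * z k ω i) * (if R k ω = i then (1:ℝ) else 0) := by
    intro z; funext ω; exact Finset.sum_congr rfl fun k _ => hexp z k ω
  rw [hrw x, hrw xHR]
  have hone : ∀ k, k ∈ Finset.Icc 1 K → 1 ≤ k := fun k hk => (Finset.mem_Icc.mp hk).1
  have hx_all := fun k hk => hgeneral x hx_meas hx01 k (hone k hk)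
  have hHR_all := fun k hk => hgeneral xHR hxHR_meas hxHR01 k (hone k hk)
  rw [integral_finset_sum _ (fun k hk => integrable_finset_sum _ (fun i _ => (hx_all k hk).1 i)),
    integral_finset_sum _ (fun k hk => integrable_finset_sum _ (fun i _ => (hHR_all k hk).1 i))]
  refine Finset.sum_le_sum fun k hk => ?_
  rw [(hx_all k hk).2.2, (hHR_all k hk).2.2]
  refine integral_mono_ae (integrable_finset_sum _ (fun i _ => (hx_all k hk).2.1 i))
    (integrable_finset_sum _ (fun i _ => (hHR_all k hk).2.1 i)) ?_
  filter_upwards [hxHR_opt k (hone k hk)] with ω hω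
  exact hω (fun i => x k ω i) (fun i => hx01 k ω i) (hx_cap k ω)
end

section
/- Object-hit upper bound via the fractional-knapsack value (inequality (17), Section 3.2). In the discrete-time caching model with variable-size objects, for each k and ω let Φ_k(ω) = sup{ ∑_i y_i·p_k(i)(ω) : y : Fin n → ℝ, 0 ≤ y_i ≤ 1 for all i, ∑_i s_i y_i ≤ B } be the fractional-knapsack value with profits p_k(i)(ω) and weights s_i. Then for every non-anticipative integral caching policy (C_k) — i.e., C_k : Ω → Finset (Fin n) is ℱ_{k-1}-measurable with ∑_{i ∈ C_k(ω)} s_i ≤ B for all ω — and every K ≥ 1, E[∑_{k=1}^K 1(R_k ∈ C_k)] ≤ E[∑_{k=1}^K Φ_k]; that is, the expected number of object hits of any non-anticipative policy is at most the expected cumulative HR-VC value. -/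
open MeasureTheory

/-- Object-hit upper bound via the fractional-knapsack value (inequality (17), Section 3.2):
for any non-anticipative integral caching policy, the expected number of object hits in the
first `K` requests is at most the expected cumulative fractional-knapsack value `Φ_k`
(the per-request conditional hit probability of the HR-VC rule). -/
theorem hr_vc_expected_hits_upper_bound
    {Ω : Type*} {𝒜 : MeasurableSpace Ω} (μ : Measure Ω) [IsProbabilityMeasure μ]
    (ℱ : ℕ → MeasurableSpace Ω) (hℱ_le : ∀ k, ℱ k ≤ 𝒜) (hℱ_mono : Monotone ℱ)
    -- objects, sizes and cache capacity in bytes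
    (n : ℕ) (s : Fin n → ℝ) (hs : ∀ i, 0 < s i) (B : ℝ) (hB : 0 < B)
    -- the request process
    (R : ℕ → Ω → Fin n) (hR : ∀ k, Measurable[ℱ k] (R k))
    -- the conditional request probabilities (normalized hazard rates)
    (p : ℕ → Ω → Fin n → ℝ)
    (hp_meas : ∀ k, 1 ≤ k → Measurable[ℱ (k - 1)] (p k))
    (hp_nonneg : ∀ k ω i, 0 ≤ p k ω i)
    (hp_sum : ∀ k ω, ∑ i, p k ω i = 1)
    (hp_cond : ∀ k, 1 ≤ k → ∀ i : Fin n,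
      μ[(fun ω => if R k ω = i then (1 : ℝ) else 0) | ℱ (k - 1)]
        =ᵐ[μ] fun ω => p k ω i)
    -- the fractional-knapsack value with profits `p k ω i` and weights `s i`
    (Φ : ℕ → Ω → ℝ)
    (hΦ : ∀ k ω, Φ k ω = sSup ((fun y : Fin n → ℝ => ∑ i, y i * p k ω i) ''
      {y | (∀ i, 0 ≤ y i ∧ y i ≤ 1) ∧ ∑ i, s i * y i ≤ B}))
    -- an arbitrary non-anticipative integral caching policy
    (C : ℕ → Ω → Finset (Fin n))
    (hC_meas : ∀ k, 1 ≤ k → ∀ i : Fin n, MeasurableSet[ℱ (k - 1)] {ω | i ∈ C k ω})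
    (hC_cap : ∀ k ω, ∑ i ∈ C k ω, s i ≤ B)
    (K : ℕ) (hK : 1 ≤ K) :
    ∫ ω, (∑ k ∈ Finset.Icc 1 K, if R k ω ∈ C k ω then (1 : ℝ) else 0) ∂μ
      ≤ ∫ ω, (∑ k ∈ Finset.Icc 1 K, Φ k ω) ∂μ := by
  classical
  -- the feasible set
  set D : Set (Fin n → ℝ) := {y | (∀ i, 0 ≤ y i ∧ y i ≤ 1) ∧ ∑ i, s i * y i ≤ B} with hD
  have h0D : (0 : Fin n → ℝ) ∈ D := by
    constructor
    · intro i; simp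
    · simp [le_of_lt hB]
  -- countable dense subset of D
  obtain ⟨t, ht_count, ht_dense⟩ := TopologicalSpace.exists_countable_dense (↥D)
  set c : Set (Fin n → ℝ) := Subtype.val '' t with hc
  have hc_count : c.Countable := ht_count.image _
  have hc_sub : c ⊆ D := by rintro _ ⟨⟨y, hy⟩, _, rfl⟩; exact hy
  have hc_dense : D ⊆ closure c := by
    intro y hy
    have h1 : (⟨y, hy⟩ : ↥D) ∈ closure t := ht_dense.closure_eq ▸ Set.mem_univ _
    exact (image_closure_subset_closure_image (continuous_subtype_val (p := (· ∈ D))))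
      (Set.mem_image_of_mem _ h1)
  have hc_ne : c.Nonempty := by
    rcases c.eq_empty_or_nonempty with h | h
    · exfalso; have := hc_dense h0D; simp [h] at this
    · exact h
  obtain ⟨e, he⟩ := Set.Countable.exists_eq_range hc_count hc_ne
  have he_mem : ∀ m, e m ∈ D := fun m => hc_sub (he ▸ Set.mem_range_self m)
  -- measurability of p components
  have hp_meas' : ∀ k, 1 ≤ k → ∀ i, Measurable (fun ω => p k ω i) := by
    intro k hk i
    exact (measurable_pi_apply i).comp ((hp_meas k hk).mono (hℱ_le _) le_rfl)
  have hp_le_one : ∀ k ω i, p k ω i ≤ 1 := by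
    intro k ω i
    calc p k ω i ≤ ∑ j, p k ω j :=
      Finset.single_le_sum (fun j _ => hp_nonneg k ω j) (Finset.mem_univ i)
    _ = 1 := hp_sum k ω
  -- bounds on the objective over D
  have hobj_le : ∀ k ω, ∀ y ∈ D, ∑ i, y i * p k ω i ≤ 1 := by
    intro k ω y hy
    calc ∑ i, y i * p k ω i ≤ ∑ i, p k ω i := by
          refine Finset.sum_le_sum fun i _ => ?_
          nlinarith [(hy.1 i).1, (hy.1 i).2, hp_nonneg k ω i]
      _ = 1 := hp_sum k ω
  have hbdd : ∀ k ω, BddAbove ((fun y : Fin n → ℝ => ∑ i, y i * p k ω i) '' D) := by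
    intro k ω
    exact ⟨1, by rintro _ ⟨y, hy, rfl⟩; exact hobj_le k ω y hy⟩
  -- Φ as countable sup
  have hΦ_iSup : ∀ k ω, Φ k ω = ⨆ m : ℕ, ∑ i, e m i * p k ω i := by
    intro k ω
    set f : (Fin n → ℝ) → ℝ := fun y => ∑ i, y i * p k ω i with hf
    have hf_cont : Continuous f := by
      apply continuous_finset_sum
      intro i _
      exact (continuous_apply i).mul continuous_const
    have hbddc : BddAbove (f '' c) := (hbdd k ω).mono (Set.image_mono hc_sub)
    have h2 : sSup (f '' D) = sSup (f '' c) := by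
      apply le_antisymm
      · apply csSup_le (Set.Nonempty.image _ ⟨0, h0D⟩)
        rintro _ ⟨y, hy, rfl⟩
        have h3 : f y ∈ closure (f '' c) :=
          image_closure_subset_closure_image hf_cont (Set.mem_image_of_mem f (hc_dense hy))
        exact closure_minimal (fun z hz => le_csSup hbddc hz) isClosed_Iic h3
      · exact csSup_le_csSup (hbdd k ω) (hc_ne.image f) (Set.image_mono hc_sub)
    have h3 : f '' c = Set.range (fun m => f (e m)) := by
      rw [he, ← Set.range_comp]; rfl
    rw [hΦ k ω, h2, h3]
    rfl
  -- measurability and bounds on Φ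
  have hΦ_meas : ∀ k, 1 ≤ k → Measurable (Φ k) := by
    intro k hk
    have h1 : Measurable (fun ω => ⨆ m : ℕ, ∑ i, e m i * p k ω i) := by
      apply Measurable.iSup
      intro m
      exact Finset.measurable_sum _ fun i _ => (hp_meas' k hk i).const_mul (e m i)
    have h2 : Φ k = fun ω => ⨆ m : ℕ, ∑ i, e m i * p k ω i := funext (hΦ_iSup k)
    rw [h2]; exact h1
  have hΦ_nonneg : ∀ k ω, 0 ≤ Φ k ω := by
    intro k ω
    rw [hΦ k ω]
    have : (0 : ℝ) ∈ (fun y : Fin n → ℝ => ∑ i, y i * p k ω i) '' D :=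
      ⟨0, h0D, by simp⟩
    exact le_csSup (hbdd k ω) this
  have hΦ_le_one : ∀ k ω, Φ k ω ≤ 1 := by
    intro k ω
    rw [hΦ k ω]
    apply csSup_le (Set.Nonempty.image _ ⟨0, h0D⟩)
    rintro _ ⟨y, hy, rfl⟩
    exact hobj_le k ω y hy
  -- integrability helper
  have hbdd_int : ∀ (f : Ω → ℝ), Measurable f → (∀ ω, |f ω| ≤ 1) → Integrable f μ := by
    intro f hf hbound
    exact (integrable_const (1 : ℝ)).mono' hf.aestronglyMeasurable (ae_of_all _ hbound)
  have hΦ_int : ∀ k, 1 ≤ k → Integrable (Φ k) μ := by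
    intro k hk
    exact hbdd_int _ (hΦ_meas k hk) fun ω =>
      abs_le.2 ⟨by linarith [hΦ_nonneg k ω], hΦ_le_one k ω⟩
  -- measurability of the hit indicator
  have hR_meas : ∀ k, Measurable (R k) := fun k => (hR k).mono (hℱ_le k) le_rfl
  have hRset : ∀ k (i : Fin n), MeasurableSet {ω | R k ω = i} := by
    intro k i
    exact hR_meas k (MeasurableSet.singleton i)
  have hCset : ∀ k, 1 ≤ k → ∀ i : Fin n, MeasurableSet {ω | i ∈ C k ω} := by
    intro k hk i
    exact hℱ_le _ _ (hC_meas k hk i)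
  have hH_meas : ∀ k, 1 ≤ k → Measurable (fun ω => if R k ω ∈ C k ω then (1:ℝ) else 0) := by
    intro k hk
    have hset : MeasurableSet {ω | R k ω ∈ C k ω} := by
      have : {ω | R k ω ∈ C k ω} = ⋃ i : Fin n, ({ω | R k ω = i} ∩ {ω | i ∈ C k ω}) := by
        ext ω; simp only [Set.mem_setOf_eq, Set.mem_iUnion, Set.mem_inter_iff]
        constructor
        · intro h; exact ⟨R k ω, rfl, h⟩
        · rintro ⟨i, rfl, h⟩; exact h
      rw [this]
      exact MeasurableSet.iUnion fun i => (hRset k i).inter (hCset k hk i)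
    exact Measurable.ite hset measurable_const measurable_const
  have hH_int : ∀ k, 1 ≤ k → Integrable (fun ω => if R k ω ∈ C k ω then (1:ℝ) else 0) μ := by
    intro k hk
    exact hbdd_int _ (hH_meas k hk) fun ω => by split <;> simp
  -- pointwise: sum of p over cache ≤ Φ
  have hG_le_Φ : ∀ k ω, (∑ i ∈ C k ω, p k ω i) ≤ Φ k ω := by
    intro k ω
    rw [hΦ k ω]
    apply le_csSup (hbdd k ω)
    refine ⟨fun i => if i ∈ C k ω then 1 else 0,
      ⟨fun i => by by_cases h : i ∈ C k ω <;> simp [h], ?_⟩, ?_⟩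
    · calc ∑ i, s i * (if i ∈ C k ω then (1:ℝ) else 0) = ∑ i ∈ C k ω, s i := by
            simp [mul_ite, mul_one, mul_zero, Finset.sum_ite_mem, Finset.univ_inter]
        _ ≤ B := hC_cap k ω
    · simp [ite_mul, one_mul, zero_mul, Finset.sum_ite_mem, Finset.univ_inter]
  -- integrability of G
  have hG_meas : ∀ k, 1 ≤ k → Measurable (fun ω => ∑ i ∈ C k ω, p k ω i) := by
    intro k hk
    have heq : (fun ω => ∑ i ∈ C k ω, p k ω i)
        = fun ω => ∑ i, (Set.indicator {ω' | i ∈ C k ω'} (fun ω' => p k ω' i)) ω := by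
      ext ω
      simp [Set.indicator_apply, Finset.sum_ite_mem, Finset.univ_inter]
    rw [heq]
    exact Finset.measurable_sum _ fun i _ =>
      (hp_meas' k hk i).indicator (hCset k hk i)
  have hG_int : ∀ k, 1 ≤ k → Integrable (fun ω => ∑ i ∈ C k ω, p k ω i) μ := by
    intro k hk
    refine hbdd_int _ (hG_meas k hk) fun ω => ?_
    rw [abs_of_nonneg (Finset.sum_nonneg fun i _ => hp_nonneg k ω i)]
    calc ∑ i ∈ C k ω, p k ω i ≤ ∑ i, p k ω i :=
          Finset.sum_le_sum_of_subset_of_nonneg (Finset.subset_univ _)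
            (fun i _ _ => hp_nonneg k ω i)
      _ = 1 := hp_sum k ω
  -- key per-request identity: E[hit] = E[G]
  have hkey : ∀ k, 1 ≤ k →
      ∫ ω, (if R k ω ∈ C k ω then (1:ℝ) else 0) ∂μ
        = ∫ ω, (∑ i ∈ C k ω, p k ω i) ∂μ := by
    intro k hk
    have hσ : SigmaFinite (μ.trim (hℱ_le (k-1))) := by
      have : IsFiniteMeasure (μ.trim (hℱ_le (k-1))) := isFiniteMeasure_trim _
      infer_instance
    -- indicator of request = i is integrable
    have hRi_int : ∀ i : Fin n,
        Integrable (fun ω => if R k ω = i then (1:ℝ) else 0) μ := by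
      intro i
      refine hbdd_int _ ?_ fun ω => by split <;> simp
      exact Measurable.ite (hRset k i) measurable_const measurable_const
    have hstep : ∀ i : Fin n,
        ∫ ω in {ω | i ∈ C k ω}, (if R k ω = i then (1:ℝ) else 0) ∂μ
          = ∫ ω in {ω | i ∈ C k ω}, p k ω i ∂μ := by
      intro i
      rw [← setIntegral_condExp (hℱ_le (k-1)) (hRi_int i) (hC_meas k hk i)]
      exact setIntegral_congr_ae (hℱ_le _ _ (hC_meas k hk i))
        ((hp_cond k hk i).mono fun ω hω _ => hω.symm) |>.symm
    -- expand hit indicator as a sum over objects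
    have hexp : ∀ ω, (if R k ω ∈ C k ω then (1:ℝ) else 0)
        = ∑ i, (if i ∈ C k ω then (1:ℝ) else 0) * (if R k ω = i then (1:ℝ) else 0) := by
      intro ω
      rw [Finset.sum_eq_single (R k ω)]
      · simp
      · intro j _ hj
        simp [Ne.symm hj]
      · simp
    have hexpG : ∀ ω, (∑ i ∈ C k ω, p k ω i)
        = ∑ i, (if i ∈ C k ω then (1:ℝ) else 0) * p k ω i := by
      intro ω
      simp [ite_mul, one_mul, zero_mul, Finset.sum_ite_mem, Finset.univ_inter]
    have hint1 : ∀ i : Fin n,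
        Integrable (fun ω => (if i ∈ C k ω then (1:ℝ) else 0) * (if R k ω = i then (1:ℝ) else 0)) μ := by
      intro i
      refine hbdd_int _ ?_ fun ω => by split <;> split <;> norm_num
      exact ((measurable_const.ite (hCset k hk i) measurable_const).mul
        (measurable_const.ite (hRset k i) measurable_const))
    have hint2 : ∀ i : Fin n,
        Integrable (fun ω => (if i ∈ C k ω then (1:ℝ) else 0) * p k ω i) μ := by
      intro i
      refine hbdd_int _ ?_ fun ω => ?_
      · exact (measurable_const.ite (hCset k hk i) measurable_const).mul (hp_meas' k hk i)
      · rw [abs_mul]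
        have h1 : |if i ∈ C k ω then (1:ℝ) else 0| ≤ 1 := by split <;> norm_num
        have h2 : |p k ω i| ≤ 1 := by
          rw [abs_of_nonneg (hp_nonneg k ω i)]; exact hp_le_one k ω i
        calc |if i ∈ C k ω then (1:ℝ) else 0| * |p k ω i| ≤ 1 * 1 := by
              apply mul_le_mul h1 h2 (abs_nonneg _) zero_le_one
          _ = 1 := by norm_num
    have hindC : ∀ i (f : Ω → ℝ),
        (fun ω => (if i ∈ C k ω then (1:ℝ) else 0) * f ω)
          = Set.indicator {ω | i ∈ C k ω} f := by
      intro i f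
      ext ω
      simp [Set.indicator_apply, ite_mul]
    calc ∫ ω, (if R k ω ∈ C k ω then (1:ℝ) else 0) ∂μ
        = ∫ ω, ∑ i, (if i ∈ C k ω then (1:ℝ) else 0) * (if R k ω = i then (1:ℝ) else 0) ∂μ := by
          exact integral_congr_ae (ae_of_all _ hexp)
      _ = ∑ i, ∫ ω, (if i ∈ C k ω then (1:ℝ) else 0) * (if R k ω = i then (1:ℝ) else 0) ∂μ :=
          integral_finset_sum _ fun i _ => hint1 i
      _ = ∑ i, ∫ ω in {ω | i ∈ C k ω}, (if R k ω = i then (1:ℝ) else 0) ∂μ := by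
          refine Finset.sum_congr rfl fun i _ => ?_
          rw [hindC i, integral_indicator (hCset k hk i)]
      _ = ∑ i, ∫ ω in {ω | i ∈ C k ω}, p k ω i ∂μ :=
          Finset.sum_congr rfl fun i _ => hstep i
      _ = ∑ i, ∫ ω, (if i ∈ C k ω then (1:ℝ) else 0) * p k ω i ∂μ := by
          refine Finset.sum_congr rfl fun i _ => ?_
          rw [hindC i, integral_indicator (hCset k hk i)]
      _ = ∫ ω, ∑ i, (if i ∈ C k ω then (1:ℝ) else 0) * p k ω i ∂μ :=
          (integral_finset_sum _ fun i _ => hint2 i).symm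
      _ = ∫ ω, (∑ i ∈ C k ω, p k ω i) ∂μ :=
          integral_congr_ae (ae_of_all _ fun ω => (hexpG ω).symm)
  -- assemble
  have hmem : ∀ k ∈ Finset.Icc 1 K, 1 ≤ k := fun k hk => (Finset.mem_Icc.1 hk).1
  rw [integral_finset_sum _ fun k hk => hH_int k (hmem k hk),
      integral_finset_sum _ fun k hk => hΦ_int k (hmem k hk)]
  refine Finset.sum_le_sum fun k hk => ?_
  rw [hkey k (hmem k hk)]
  exact integral_mono (hG_int k (hmem k hk)) (hΦ_int k (hmem k hk)) (hG_le_Φ k)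
end

section
/- Theorem (Section 3.3, stationary object hit probability for variable sizes). In the discrete-time caching model with variable-size objects, let (C_k) be a non-anticipative integral caching policy (C_k : Ω → Finset (Fin n) is ℱ_{k-1}-measurable with ∑_{i ∈ C_k(ω)} s_i ≤ B for all ω), and let Φ_k(ω) = sup{ ∑_i y_i·p_k(i)(ω) : 0 ≤ y_i ≤ 1, ∑_i s_i y_i ≤ B }. If there exist real constants h^π and h^HR-VC such that (1/K)·∑_{k=1}^K 1(R_k ∈ C_k) → h^π μ-almost everywhere and (1/K)·∑_{k=1}^K Φ_k → h^HR-VC μ-almost everywhere as K → ∞, then h^π ≤ h^HR-VC. -/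
open MeasureTheory Filter Topology

namespace HRVC

variable {n : ℕ}

/-- feasible set of the fractional knapsack -/
def feas (s : Fin n → ℝ) (B : ℝ) : Set (Fin n → ℝ) :=
  {y | (∀ i, 0 ≤ y i ∧ y i ≤ 1) ∧ ∑ i, s i * y i ≤ B}

noncomputable def knap (s : Fin n → ℝ) (B : ℝ) (q : Fin n → ℝ) : ℝ :=
  sSup ((fun y : Fin n → ℝ => ∑ i, y i * q i) '' feas s B)

lemma zero_mem_feas {s : Fin n → ℝ} {B : ℝ} (hB : 0 ≤ B) : (0 : Fin n → ℝ) ∈ feas s B := by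
  refine ⟨fun i => ⟨le_rfl, zero_le_one⟩, by simpa using hB⟩

lemma feas_nonempty {s : Fin n → ℝ} {B : ℝ} (q : Fin n → ℝ) (hB : 0 ≤ B) :
    ((fun y : Fin n → ℝ => ∑ i, y i * q i) '' feas s B).Nonempty :=
  ⟨_, ⟨0, zero_mem_feas hB, rfl⟩⟩

lemma val_le {q y : Fin n → ℝ} (hy : ∀ i, 0 ≤ y i ∧ y i ≤ 1) :
    ∑ i, y i * q i ≤ ∑ i, |q i| := by
  refine Finset.sum_le_sum fun i _ => ?_
  calc y i * q i ≤ |y i * q i| := le_abs_self _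
    _ = y i * |q i| := by rw [abs_mul, abs_of_nonneg (hy i).1]
    _ ≤ 1 * |q i| := by
        exact mul_le_mul_of_nonneg_right (hy i).2 (abs_nonneg _)
    _ = |q i| := one_mul _

lemma knap_bddAbove (s : Fin n → ℝ) (B : ℝ) (q : Fin n → ℝ) :
    BddAbove ((fun y : Fin n → ℝ => ∑ i, y i * q i) '' feas s B) := by
  refine ⟨∑ i, |q i|, ?_⟩
  rintro v ⟨y, hy, rfl⟩
  exact val_le hy.1

lemma le_knap {s : Fin n → ℝ} {B : ℝ} {q y : Fin n → ℝ} (hy : y ∈ feas s B) :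
    ∑ i, y i * q i ≤ knap s B q :=
  le_csSup (knap_bddAbove s B q) ⟨y, hy, rfl⟩

lemma knap_le {s : Fin n → ℝ} {B : ℝ} {q : Fin n → ℝ} (hB : 0 ≤ B) {c : ℝ}
    (h : ∀ y ∈ feas s B, ∑ i, y i * q i ≤ c) : knap s B q ≤ c := by
  refine csSup_le (feas_nonempty q hB) ?_
  rintro v ⟨y, hy, rfl⟩
  exact h y hy

lemma knap_nonneg {s : Fin n → ℝ} {B : ℝ} {q : Fin n → ℝ} (hB : 0 ≤ B) : 0 ≤ knap s B q := by
  have := le_knap (s := s) (B := B) (q := q) (zero_mem_feas hB)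
  simpa using this

lemma knap_sub_le {s : Fin n → ℝ} {B : ℝ} (hB : 0 ≤ B) (q q' : Fin n → ℝ) :
    knap s B q ≤ knap s B q' + ∑ i, |q i - q' i| := by
  refine knap_le hB fun y hy => ?_
  have h1 : ∑ i, y i * q i = ∑ i, y i * q' i + ∑ i, y i * (q i - q' i) := by
    rw [← Finset.sum_add_distrib]; congr 1; ext i; ring
  rw [h1]
  have h2 : ∑ i, y i * (q i - q' i) ≤ ∑ i, |q i - q' i| := val_le hy.1
  exact add_le_add (le_knap hy) h2

lemma knap_continuous {s : Fin n → ℝ} {B : ℝ} (hB : 0 ≤ B) : Continuous (knap s B) := by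
  refine (LipschitzWith.of_dist_le_mul (K := n) fun q q' => ?_).continuous
  have key : ∀ a b : Fin n → ℝ, knap s B a - knap s B b ≤ ↑n * dist a b := by
    intro a b
    have h1 := knap_sub_le (s := s) hB a b
    have h2 : ∑ i, |a i - b i| ≤ ∑ _i : Fin n, dist a b := by
      refine Finset.sum_le_sum fun i _ => ?_
      rw [← Real.dist_eq]; exact dist_le_pi_dist a b i
    simp only [Finset.sum_const, Finset.card_univ, Fintype.card_fin, nsmul_eq_mul] at h2
    linarith
  rw [Real.dist_eq, abs_sub_le_iff]
  constructor
  · simpa using key q q'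
  · rw [dist_comm q q']; simpa using key q' q

lemma knap_le_one {s : Fin n → ℝ} {B : ℝ} (hB : 0 ≤ B) {q : Fin n → ℝ}
    (hq0 : ∀ i, 0 ≤ q i) (hq1 : ∑ i, q i = 1) : knap s B q ≤ 1 := by
  refine knap_le hB fun y hy => ?_
  calc ∑ i, y i * q i ≤ ∑ i, q i := by
        refine Finset.sum_le_sum fun i _ => ?_
        nth_rewrite 2 [← one_mul (q i)]
        exact mul_le_mul_of_nonneg_right (hy.1 i).2 (hq0 i)
    _ = 1 := hq1

end HRVC

/-- Theorem (Section 3.3): if the almost-sure Cesàro hit frequency of a non-anticipative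
integral caching policy and the almost-sure Cesàro average of the fractional-knapsack
values `Φ_k` (the HR-VC per-request conditional hit probabilities) both exist, then the
stationary object hit probability of the policy is at most the HR-VC limit. -/
theorem hr_vc_stationary_hit_probability
    {Ω : Type*} {𝒜 : MeasurableSpace Ω} (μ : Measure Ω) [IsProbabilityMeasure μ]
    (ℱ : ℕ → MeasurableSpace Ω) (hℱ_le : ∀ k, ℱ k ≤ 𝒜) (hℱ_mono : Monotone ℱ)
    (n : ℕ) (s : Fin n → ℝ) (hs : ∀ i, 0 < s i) (B : ℝ) (hB : 0 < B)
    (R : ℕ → Ω → Fin n) (hR : ∀ k, Measurable[ℱ k] (R k))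
    (p : ℕ → Ω → Fin n → ℝ)
    (hp_meas : ∀ k, 1 ≤ k → Measurable[ℱ (k - 1)] (p k))
    (hp_nonneg : ∀ k ω i, 0 ≤ p k ω i)
    (hp_sum : ∀ k ω, ∑ i, p k ω i = 1)
    (hp_cond : ∀ k, 1 ≤ k → ∀ i : Fin n,
      μ[(fun ω => if R k ω = i then (1 : ℝ) else 0) | ℱ (k - 1)]
        =ᵐ[μ] fun ω => p k ω i)
    -- the fractional-knapsack value with profits `p k ω i` and weights `s i`
    (Φ : ℕ → Ω → ℝ)
    (hΦ : ∀ k ω, Φ k ω = sSup ((fun y : Fin n → ℝ => ∑ i, y i * p k ω i) ''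
      {y | (∀ i, 0 ≤ y i ∧ y i ≤ 1) ∧ ∑ i, s i * y i ≤ B}))
    -- a non-anticipative integral caching policy
    (C : ℕ → Ω → Finset (Fin n))
    (hC_meas : ∀ k, 1 ≤ k → ∀ i : Fin n, MeasurableSet[ℱ (k - 1)] {ω | i ∈ C k ω})
    (hC_cap : ∀ k ω, ∑ i ∈ C k ω, s i ≤ B)
    -- existence of the almost-sure Cesàro limits
    (hπ hHRVC : ℝ)
    (hπ_lim : ∀ᵐ ω ∂μ, Tendsto
      (fun K : ℕ => (K : ℝ)⁻¹ * ∑ k ∈ Finset.Icc 1 K, if R k ω ∈ C k ω then (1 : ℝ) else 0)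
      atTop (𝓝 hπ))
    (hHRVC_lim : ∀ᵐ ω ∂μ, Tendsto
      (fun K : ℕ => (K : ℝ)⁻¹ * ∑ k ∈ Finset.Icc 1 K, Φ k ω)
      atTop (𝓝 hHRVC)) :
    hπ ≤ hHRVC := by
  classical
  have hB' : (0:ℝ) ≤ B := hB.le
  -- basic bounds on p
  have hp_le_one : ∀ k ω i, p k ω i ≤ 1 := by
    intro k ω i
    calc p k ω i ≤ ∑ j, p k ω j :=
          Finset.single_le_sum (fun j _ => hp_nonneg k ω j) (Finset.mem_univ i)
      _ = 1 := hp_sum k ω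
  -- Φ as knapsack value
  have hΦeq : ∀ k, Φ k = fun ω => HRVC.knap s B (p k ω) := fun k => funext fun ω => hΦ k ω
  have hΦ0 : ∀ k ω, 0 ≤ Φ k ω := by
    intro k ω; rw [hΦeq k]; exact HRVC.knap_nonneg hB'
  have hΦ1 : ∀ k ω, Φ k ω ≤ 1 := by
    intro k ω; rw [hΦeq k]
    exact HRVC.knap_le_one hB' (hp_nonneg k ω) (hp_sum k ω)
  -- integrability of bounded measurable functions
  have hbdd_int : ∀ (f : Ω → ℝ) (c : ℝ), Measurable f → (∀ ω, |f ω| ≤ c) → Integrable f μ := by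
    intro f c hf h
    exact (integrable_const c).mono' hf.aestronglyMeasurable
      (Filter.Eventually.of_forall fun ω => by simpa using h ω)
  -- measurability pieces
  have hRmeas : ∀ k (i : Fin n), Measurable (fun ω => if R k ω = i then (1:ℝ) else 0) := by
    intro k i
    have hset : MeasurableSet {ω | R k ω = i} :=
      ((hR k).mono (hℱ_le k) le_rfl) (measurableSet_singleton i)
    exact Measurable.ite hset measurable_const measurable_const
  have hA : ∀ k, 1 ≤ k → ∀ i : Fin n, MeasurableSet {ω | i ∈ C k ω} := by
    intro k hk i
    exact hℱ_le (k-1) _ (hC_meas k hk i)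
  have hpmeas : ∀ k, 1 ≤ k → ∀ i : Fin n, Measurable (fun ω => p k ω i) := by
    intro k hk i
    exact (measurable_pi_apply i).comp ((hp_meas k hk).mono (hℱ_le _) le_rfl)
  have hint_Ri : ∀ k (i : Fin n), Integrable (fun ω => if R k ω = i then (1:ℝ) else 0) μ := by
    intro k i
    refine hbdd_int _ 1 (hRmeas k i) fun ω => ?_
    split <;> simp
  have hint_pi : ∀ k, 1 ≤ k → ∀ i : Fin n, Integrable (fun ω => p k ω i) μ := by
    intro k hk i
    refine hbdd_int _ 1 (hpmeas k hk i) fun ω => ?_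
    rw [abs_le]; exact ⟨by linarith [hp_nonneg k ω i], hp_le_one k ω i⟩
  have hΦmeas : ∀ k, 1 ≤ k → Measurable (Φ k) := by
    intro k hk
    rw [hΦeq k]
    exact (HRVC.knap_continuous hB').measurable.comp ((hp_meas k hk).mono (hℱ_le _) le_rfl)
  have hΦint : ∀ k, 1 ≤ k → Integrable (Φ k) μ := by
    intro k hk
    refine hbdd_int _ 1 (hΦmeas k hk) fun ω => ?_
    rw [abs_le]; exact ⟨by linarith [hΦ0 k ω], hΦ1 k ω⟩
  -- decomposition of the hit indicator
  have hpt : ∀ k (ω : Ω), (if R k ω ∈ C k ω then (1:ℝ) else 0)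
      = ∑ i, ({x | i ∈ C k x}).indicator (fun x => if R k x = i then (1:ℝ) else 0) ω := by
    intro k ω
    rw [Finset.sum_eq_single (R k ω)]
    · simp [Set.indicator_apply]
    · intro b _ hb
      simp [Set.indicator_apply, Ne.symm hb]
    · simp
  have hmeas_ind : ∀ k, 1 ≤ k → Measurable (fun ω => if R k ω ∈ C k ω then (1:ℝ) else 0) := by
    intro k hk
    rw [show (fun ω => if R k ω ∈ C k ω then (1:ℝ) else 0)
        = fun ω => ∑ i, ({x | i ∈ C k x}).indicator (fun x => if R k x = i then (1:ℝ) else 0) ω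
      from funext (hpt k)]
    exact Finset.measurable_sum _ fun i _ => ((hRmeas k i).indicator (hA k hk i))
  have hint_ind : ∀ k, 1 ≤ k →
      Integrable (fun ω => if R k ω ∈ C k ω then (1:ℝ) else 0) μ := by
    intro k hk
    refine hbdd_int _ 1 (hmeas_ind k hk) fun ω => ?_
    split <;> simp
  -- key per-step inequality
  have key : ∀ k, 1 ≤ k →
      ∫ ω, (if R k ω ∈ C k ω then (1:ℝ) else 0) ∂μ ≤ ∫ ω, Φ k ω ∂μ := by
    intro k hk
    have step1 : ∫ ω, (if R k ω ∈ C k ω then (1:ℝ) else 0) ∂μ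
        = ∑ i, ∫ ω, ({x | i ∈ C k x}).indicator (fun x => if R k x = i then (1:ℝ) else 0) ω ∂μ := by
      rw [← integral_finset_sum _ (fun i _ => (hint_Ri k i).indicator (hA k hk i))]
      exact integral_congr_ae (Filter.Eventually.of_forall fun ω => hpt k ω)
    have step2 : ∀ i : Fin n,
        ∫ ω, ({x | i ∈ C k x}).indicator (fun x => if R k x = i then (1:ℝ) else 0) ω ∂μ
          = ∫ ω, ({x | i ∈ C k x}).indicator (fun x => p k x i) ω ∂μ := by
      intro i
      rw [integral_indicator (hA k hk i), integral_indicator (hA k hk i)]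
      calc ∫ x in {x | i ∈ C k x}, (if R k x = i then (1:ℝ) else 0) ∂μ
          = ∫ x in {x | i ∈ C k x},
              (μ[(fun ω => if R k ω = i then (1 : ℝ) else 0) | ℱ (k - 1)]) x ∂μ :=
            (setIntegral_condExp (hℱ_le (k-1)) (hint_Ri k i) (hC_meas k hk i)).symm
        _ = ∫ x in {x | i ∈ C k x}, p k x i ∂μ :=
            integral_congr_ae (ae_restrict_of_ae (hp_cond k hk i))
    have step3 : ∑ i, ∫ ω, ({x | i ∈ C k x}).indicator (fun x => p k x i) ω ∂μ
        = ∫ ω, ∑ i, ({x | i ∈ C k x}).indicator (fun x => p k x i) ω ∂μ :=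
      (integral_finset_sum _ (fun i _ => (hint_pi k hk i).indicator (hA k hk i))).symm
    have step4 : ∀ ω, ∑ i, ({x | i ∈ C k x}).indicator (fun x => p k x i) ω
        = ∑ i ∈ C k ω, p k ω i := by
      intro ω
      simp only [Set.indicator_apply, Set.mem_setOf_eq]
      rw [Finset.sum_ite_mem, Finset.univ_inter]
    have step5 : ∀ ω, ∑ i ∈ C k ω, p k ω i ≤ Φ k ω := by
      intro ω
      rw [hΦeq k]
      have hy : (fun i => if i ∈ C k ω then (1:ℝ) else 0) ∈ HRVC.feas s B := by
        constructor
        · intro i; dsimp only; split <;> norm_num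
        · calc ∑ i, s i * (if i ∈ C k ω then (1:ℝ) else 0)
              = ∑ i, (if i ∈ C k ω then s i else 0) := by
                refine Finset.sum_congr rfl fun i _ => ?_
                split <;> simp
            _ = ∑ i ∈ C k ω, s i := by rw [Finset.sum_ite_mem, Finset.univ_inter]
            _ ≤ B := hC_cap k ω
      have hval := HRVC.le_knap (q := p k ω) hy
      have hsum : ∑ i, (if i ∈ C k ω then (1:ℝ) else 0) * p k ω i
          = ∑ i ∈ C k ω, p k ω i := by
        calc ∑ i, (if i ∈ C k ω then (1:ℝ) else 0) * p k ω i
            = ∑ i, (if i ∈ C k ω then p k ω i else 0) :=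
              Finset.sum_congr rfl fun i _ => by split <;> simp
          _ = ∑ i ∈ C k ω, p k ω i := by rw [Finset.sum_ite_mem, Finset.univ_inter]
      exact hsum ▸ hval
    calc ∫ ω, (if R k ω ∈ C k ω then (1:ℝ) else 0) ∂μ
        = ∑ i, ∫ ω, ({x | i ∈ C k x}).indicator (fun x => if R k x = i then (1:ℝ) else 0) ω ∂μ := step1
      _ = ∑ i, ∫ ω, ({x | i ∈ C k x}).indicator (fun x => p k x i) ω ∂μ :=
          Finset.sum_congr rfl fun i _ => step2 i
      _ = ∫ ω, ∑ i, ({x | i ∈ C k x}).indicator (fun x => p k x i) ω ∂μ := step3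
      _ = ∫ ω, ∑ i ∈ C k ω, p k ω i ∂μ :=
          integral_congr_ae (Filter.Eventually.of_forall fun ω => step4 ω)
      _ ≤ ∫ ω, Φ k ω ∂μ := by
          refine integral_mono ?_ (hΦint k hk) step5
          have hg : Integrable
              (fun ω => ∑ i, ({x | i ∈ C k x}).indicator (fun x => p k x i) ω) μ :=
            integrable_finset_sum _ (fun i _ => (hint_pi k hk i).indicator (hA k hk i))
          exact hg.congr (Filter.Eventually.of_forall fun ω => step4 ω)
  -- averaged inequality
  have havgle : ∀ K : ℕ,
      ∫ ω, (K : ℝ)⁻¹ * ∑ k ∈ Finset.Icc 1 K, (if R k ω ∈ C k ω then (1:ℝ) else 0) ∂μ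
        ≤ ∫ ω, (K : ℝ)⁻¹ * ∑ k ∈ Finset.Icc 1 K, Φ k ω ∂μ := by
    intro K
    rw [integral_const_mul, integral_const_mul,
      integral_finset_sum _ (fun k hk => hint_ind k (Finset.mem_Icc.mp hk).1),
      integral_finset_sum _ (fun k hk => hΦint k (Finset.mem_Icc.mp hk).1)]
    refine mul_le_mul_of_nonneg_left ?_ (inv_nonneg.2 (Nat.cast_nonneg K))
    exact Finset.sum_le_sum fun k hk => key k (Finset.mem_Icc.mp hk).1
  -- uniform bound for averaged sums
  have havgbd : ∀ (K : ℕ) (g : ℕ → ℝ), (∀ k, 0 ≤ g k) → (∀ k, g k ≤ 1) →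
      |(K : ℝ)⁻¹ * ∑ k ∈ Finset.Icc 1 K, g k| ≤ 1 := by
    intro K g h0 h1
    have hS0 : 0 ≤ ∑ k ∈ Finset.Icc 1 K, g k := Finset.sum_nonneg fun k _ => h0 k
    have hS1 : ∑ k ∈ Finset.Icc 1 K, g k ≤ (K:ℝ) := by
      calc ∑ k ∈ Finset.Icc 1 K, g k ≤ ∑ _k ∈ Finset.Icc 1 K, (1:ℝ) :=
            Finset.sum_le_sum fun k _ => h1 k
        _ = (K:ℝ) := by simp
    rw [abs_of_nonneg (mul_nonneg (inv_nonneg.2 (Nat.cast_nonneg K)) hS0)]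
    rcases Nat.eq_zero_or_pos K with h | h
    · simp [h]
    · have hK : (0:ℝ) < K := Nat.cast_pos.2 h
      calc (K:ℝ)⁻¹ * ∑ k ∈ Finset.Icc 1 K, g k ≤ (K:ℝ)⁻¹ * K :=
            mul_le_mul_of_nonneg_left hS1 (inv_nonneg.2 hK.le)
        _ = 1 := inv_mul_cancel₀ hK.ne'
  -- dominated convergence for both sequences
  have hT1 : Tendsto (fun K : ℕ =>
      ∫ ω, (K : ℝ)⁻¹ * ∑ k ∈ Finset.Icc 1 K, (if R k ω ∈ C k ω then (1:ℝ) else 0) ∂μ)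
      atTop (𝓝 hπ) := by
    have := tendsto_integral_of_dominated_convergence (μ := μ)
      (F := fun K ω => (K : ℝ)⁻¹ * ∑ k ∈ Finset.Icc 1 K, (if R k ω ∈ C k ω then (1:ℝ) else 0))
      (f := fun _ => hπ) (bound := fun _ => (1:ℝ))
      (fun K => (measurable_const.mul (Finset.measurable_sum _
        (fun k hk => hmeas_ind k (Finset.mem_Icc.mp hk).1))).aestronglyMeasurable)
      (integrable_const 1)
      (fun K => Filter.Eventually.of_forall fun ω => by
        have := havgbd K (fun k => if R k ω ∈ C k ω then (1:ℝ) else 0)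
          (fun k => by split <;> norm_num) (fun k => by split <;> norm_num)
        simpa only [Real.norm_eq_abs] using this)
      hπ_lim
    simpa using this
  have hT2 : Tendsto (fun K : ℕ =>
      ∫ ω, (K : ℝ)⁻¹ * ∑ k ∈ Finset.Icc 1 K, Φ k ω ∂μ) atTop (𝓝 hHRVC) := by
    have := tendsto_integral_of_dominated_convergence (μ := μ)
      (F := fun K ω => (K : ℝ)⁻¹ * ∑ k ∈ Finset.Icc 1 K, Φ k ω)
      (f := fun _ => hHRVC) (bound := fun _ => (1:ℝ))
      (fun K => (measurable_const.mul (Finset.measurable_sum _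
        (fun k hk => hΦmeas k (Finset.mem_Icc.mp hk).1))).aestronglyMeasurable)
      (integrable_const 1)
      (fun K => Filter.Eventually.of_forall fun ω => by
        have := havgbd K (fun k => Φ k ω) (fun k => hΦ0 k ω) (fun k => hΦ1 k ω)
        simpa only [Real.norm_eq_abs] using this)
      hHRVC_lim
    simpa using this
  exact le_of_tendsto_of_tendsto' hT1 hT2 havgle
end

section
/- Optimality of the static top-B cache under the independent reference model (Section 4.1). In the discrete-time caching model with equal-size objects, suppose additionally that there is a fixed probability vector q : Fin n → ℝ (q_i ≥ 0, ∑_i q_i = 1) such that p_k(i)(ω) = q_i for all k, i, ω (requests are i.i.d. with P(R_k = i) = q_i, independent of the past). Let Top ⊆ Fin n with |Top| = B and q_j ≤ q_i for every i ∈ Top and j ∉ Top. Then for every non-anticipative caching policy (C_k) and every K ≥ 1, E[∑_{k=1}^K 1(R_k ∈ C_k)] ≤ K·∑_{i ∈ Top} q_i, and the static policy C_k ≡ Top achieves E[∑_{k=1}^K 1(R_k ∈ Top)] = K·∑_{i ∈ Top} q_i. In particular, the optimal stationary hit probability equals ∑_{i ∈ Top} q_i (which is ∑_{i=1}^B λ_i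 / ∑_{j=1}^n λ_j when q_i = λ_i/∑_j λ_j and λ_1 ≥ ⋯ ≥ λ_n). -/
open MeasureTheory

lemma sum_le_sum_top {n : ℕ} (q : Fin n → ℝ) (Top S : Finset (Fin n))
    (hcard : S.card = Top.card)
    (hTop : ∀ i ∈ Top, ∀ j ∉ Top, q j ≤ q i) :
    ∑ i ∈ S, q i ≤ ∑ i ∈ Top, q i := by
  have hdiff : (S \ Top).card = (Top \ S).card := by
    have h1 := Finset.card_sdiff_add_card_inter S Top
    have h2 := Finset.card_sdiff_add_card_inter Top S
    rw [Finset.inter_comm] at h2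
    omega
  have key : ∑ j ∈ S \ Top, q j ≤ ∑ i ∈ Top \ S, q i := by
    let e := Finset.equivOfCardEq hdiff
    have h1 : ∑ j ∈ S \ Top, q j = ∑ j : (S \ Top : Finset (Fin n)), q j :=
      (Finset.sum_coe_sort _ _).symm
    have h2 : ∑ i ∈ Top \ S, q i = ∑ i : (Top \ S : Finset (Fin n)), q i :=
      (Finset.sum_coe_sort _ _).symm
    rw [h1, h2, ← Equiv.sum_comp e (fun i : (Top \ S : Finset (Fin n)) => q i)]
    apply Finset.sum_le_sum
    intro j _
    have hj : (j : Fin n) ∉ Top := (Finset.mem_sdiff.mp j.2).2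
    have he : ((e j : Fin n)) ∈ Top := (Finset.mem_sdiff.mp (e j).2).1
    exact hTop _ he _ hj
  calc ∑ i ∈ S, q i = ∑ i ∈ S ∩ Top, q i + ∑ i ∈ S \ Top, q i :=
        (Finset.sum_inter_add_sum_sdiff S Top q).symm
    _ ≤ ∑ i ∈ S ∩ Top, q i + ∑ i ∈ Top \ S, q i := by linarith
    _ = ∑ i ∈ Top ∩ S, q i + ∑ i ∈ Top \ S, q i := by rw [Finset.inter_comm]
    _ = ∑ i ∈ Top, q i := Finset.sum_inter_add_sum_sdiff Top S q

/-- Optimality of the static top-B cache under the independent reference model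
(Section 4.1): if each request is, conditionally on the past, for object `i` with a fixed
probability `q i`, then every non-anticipative policy gets at most `K·∑_{i ∈ Top} q i`
expected hits in the first `K` requests, and the static policy caching the top-`B` set
`Top` achieves exactly this value. -/
theorem static_topB_optimal_irm
    {Ω : Type*} {𝒜 : MeasurableSpace Ω} (μ : Measure Ω) [IsProbabilityMeasure μ]
    (ℱ : ℕ → MeasurableSpace Ω) (hℱ_le : ∀ k, ℱ k ≤ 𝒜) (hℱ_mono : Monotone ℱ)
    (n B : ℕ) (hB : B ≤ n)
    (R : ℕ → Ω → Fin n) (hR : ∀ k, Measurable[ℱ k] (R k))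
    -- the independent reference model: fixed request probabilities q
    (q : Fin n → ℝ) (hq_nonneg : ∀ i, 0 ≤ q i) (hq_sum : ∑ i, q i = 1)
    (hq_cond : ∀ k, 1 ≤ k → ∀ i : Fin n,
      μ[(fun ω => if R k ω = i then (1 : ℝ) else 0) | ℱ (k - 1)]
        =ᵐ[μ] fun _ => q i)
    -- the set of the B most popular objects
    (Top : Finset (Fin n)) (hTop_card : Top.card = B)
    (hTop : ∀ i ∈ Top, ∀ j ∉ Top, q j ≤ q i)
    -- an arbitrary non-anticipative caching policy
    (C : ℕ → Ω → Finset (Fin n))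
    (hC_meas : ∀ k, 1 ≤ k → ∀ i : Fin n, MeasurableSet[ℱ (k - 1)] {ω | i ∈ C k ω})
    (hC_card : ∀ k ω, (C k ω).card = B)
    (K : ℕ) (hK : 1 ≤ K) :
    (∫ ω, (∑ k ∈ Finset.Icc 1 K, if R k ω ∈ C k ω then (1 : ℝ) else 0) ∂μ
        ≤ K * ∑ i ∈ Top, q i)
    ∧ (∫ ω, (∑ k ∈ Finset.Icc 1 K, if R k ω ∈ Top then (1 : ℝ) else 0) ∂μ
        = K * ∑ i ∈ Top, q i) := by
  have main : ∀ k, 1 ≤ k →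
      (Integrable (fun ω => if R k ω ∈ C k ω then (1:ℝ) else 0) μ ∧
       ∫ ω, (if R k ω ∈ C k ω then (1:ℝ) else 0) ∂μ ≤ ∑ i ∈ Top, q i) ∧
      (Integrable (fun ω => if R k ω ∈ Top then (1:ℝ) else 0) μ ∧
       ∫ ω, (if R k ω ∈ Top then (1:ℝ) else 0) ∂μ = ∑ i ∈ Top, q i) := by
    intro k hk
    have hm : ℱ (k - 1) ≤ 𝒜 := hℱ_le _
    haveI : SigmaFinite (μ.trim hm) := by
      have : IsFiniteMeasure (μ.trim hm) := isFiniteMeasure_trim hm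
      infer_instance
    have hRk : Measurable (R k) := (hR k).mono (hℱ_le k) le_rfl
    have hAi : ∀ i : Fin n, MeasurableSet {ω | i ∈ C k ω} := fun i => hm _ (hC_meas k hk i)
    have hRi : ∀ i : Fin n, MeasurableSet {ω | R k ω = i} := fun i =>
      hRk (measurableSet_singleton i)
    have hf_eq : ∀ i : Fin n, (fun ω => if R k ω = i then (1:ℝ) else 0)
        = Set.indicator {ω | R k ω = i} (fun _ => (1:ℝ)) := by
      intro i; funext ω; simp [Set.indicator_apply]
    have hf_int : ∀ i : Fin n, Integrable (fun ω => if R k ω = i then (1:ℝ) else 0) μ := by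
      intro i; rw [hf_eq]; exact (integrable_const 1).indicator (hRi i)
    -- set-integral computation
    have hsetint : ∀ i : Fin n,
        ∫ ω in {ω | i ∈ C k ω}, (if R k ω = i then (1:ℝ) else 0) ∂μ
          = (μ {ω | i ∈ C k ω}).toReal * q i := by
      intro i
      rw [← setIntegral_condExp hm (hf_int i) (hC_meas k hk i),
        setIntegral_congr_ae (hAi i) ((hq_cond k hk i).mono fun ω hω _ => hω),
        setIntegral_const, smul_eq_mul]
      rfl
    -- rewrite the hit indicator as a finite sum of indicators
    have hg_eq : (fun ω => if R k ω ∈ C k ω then (1:ℝ) else 0)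
        = fun ω => ∑ i : Fin n,
            Set.indicator {ω' | i ∈ C k ω'} (fun ω' => if R k ω' = i then (1:ℝ) else 0) ω := by
      funext ω
      have h1 : ∀ i : Fin n,
          Set.indicator {ω' | i ∈ C k ω'} (fun ω' => if R k ω' = i then (1:ℝ) else 0) ω
            = if R k ω = i then (if i ∈ C k ω then (1:ℝ) else 0) else 0 := by
        intro i
        by_cases h1 : i ∈ C k ω <;> by_cases h2 : R k ω = i <;>
          simp [Set.indicator_apply, h1, h2]
      rw [Finset.sum_congr rfl (fun i _ => h1 i), Finset.sum_ite_eq]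
      simp
    have hA_int : ∀ i : Fin n, Integrable
        (Set.indicator {ω' | i ∈ C k ω'} (fun ω' => if R k ω' = i then (1:ℝ) else 0)) μ :=
      fun i => (hf_int i).indicator (hAi i)
    have hg_int : Integrable (fun ω => if R k ω ∈ C k ω then (1:ℝ) else 0) μ := by
      rw [hg_eq]; exact integrable_finset_sum _ (fun i _ => hA_int i)
    have hint_g : ∫ ω, (if R k ω ∈ C k ω then (1:ℝ) else 0) ∂μ
        = ∑ i : Fin n, (μ {ω | i ∈ C k ω}).toReal * q i := by
      rw [hg_eq, integral_finset_sum _ (fun i _ => hA_int i)]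
      refine Finset.sum_congr rfl fun i _ => ?_
      rw [integral_indicator (hAi i), hsetint i]
    -- the key pointwise bound
    have hind_int : ∀ i : Fin n,
        Integrable (Set.indicator {ω | i ∈ C k ω} (fun _ => q i)) μ :=
      fun i => (integrable_const _).indicator (hAi i)
    have hsum_fun : (fun ω => ∑ i ∈ C k ω, q i)
        = fun ω => ∑ i : Fin n, Set.indicator {ω' | i ∈ C k ω'} (fun _ => q i) ω := by
      funext ω
      have : ∀ i : Fin n, Set.indicator {ω' | i ∈ C k ω'} (fun _ => q i) ω
          = if i ∈ C k ω then q i else 0 := by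
        intro i; by_cases h : i ∈ C k ω <;> simp [Set.indicator_apply, h]
      rw [Finset.sum_congr rfl (fun i _ => this i), Finset.sum_ite_mem, Finset.univ_inter]
    have hsum_int : Integrable (fun ω => ∑ i ∈ C k ω, q i) μ := by
      rw [hsum_fun]; exact integrable_finset_sum _ (fun i _ => hind_int i)
    have hRHS : ∑ i : Fin n, (μ {ω | i ∈ C k ω}).toReal * q i
        = ∫ ω, ∑ i ∈ C k ω, q i ∂μ := by
      rw [hsum_fun, integral_finset_sum _ (fun i _ => hind_int i)]
      refine Finset.sum_congr rfl fun i _ => ?_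
      rw [integral_indicator_const _ (hAi i), smul_eq_mul]
      rfl
    have hbound : ∫ ω, ∑ i ∈ C k ω, q i ∂μ ≤ ∑ i ∈ Top, q i := by
      calc ∫ ω, ∑ i ∈ C k ω, q i ∂μ ≤ ∫ _, (∑ i ∈ Top, q i) ∂μ := by
            refine integral_mono hsum_int (integrable_const _) fun ω => ?_
            exact sum_le_sum_top q Top (C k ω) (by rw [hC_card, hTop_card]) hTop
        _ = ∑ i ∈ Top, q i := by simp
    -- the Top equality
    have hEf : ∀ i : Fin n, ∫ ω, (if R k ω = i then (1:ℝ) else 0) ∂μ = q i := by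
      intro i
      rw [← integral_condExp hm, integral_congr_ae (hq_cond k hk i)]
      simp
    have htop_eq : (fun ω => if R k ω ∈ Top then (1:ℝ) else 0)
        = fun ω => ∑ i ∈ Top, (if R k ω = i then (1:ℝ) else 0) := by
      funext ω; rw [Finset.sum_ite_eq]
    have htop_int : Integrable (fun ω => if R k ω ∈ Top then (1:ℝ) else 0) μ := by
      rw [htop_eq]; exact integrable_finset_sum _ (fun i _ => hf_int i)
    refine ⟨⟨hg_int, ?_⟩, htop_int, ?_⟩
    · rw [hint_g, hRHS]; exact hbound
    · rw [htop_eq, integral_finset_sum _ (fun i _ => hf_int i)]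
      exact Finset.sum_congr rfl fun i _ => hEf i
  have hmem : ∀ k ∈ Finset.Icc 1 K, 1 ≤ k := fun k hk => (Finset.mem_Icc.mp hk).1
  have hcardIcc : (Finset.Icc 1 K).card = K := by rw [Nat.card_Icc]; omega
  constructor
  · rw [integral_finset_sum _ (fun k hk => (main k (hmem k hk)).1.1)]
    calc ∑ k ∈ Finset.Icc 1 K, ∫ ω, (if R k ω ∈ C k ω then (1:ℝ) else 0) ∂μ
        ≤ ∑ _k ∈ Finset.Icc 1 K, ∑ i ∈ Top, q i :=
          Finset.sum_le_sum fun k hk => (main k (hmem k hk)).1.2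
      _ = K * ∑ i ∈ Top, q i := by rw [Finset.sum_const, hcardIcc, nsmul_eq_mul]
  · rw [integral_finset_sum _ (fun k hk => (main k (hmem k hk)).2.1)]
    calc ∑ k ∈ Finset.Icc 1 K, ∫ ω, (if R k ω ∈ Top then (1:ℝ) else 0) ∂μ
        = ∑ _k ∈ Finset.Icc 1 K, ∑ i ∈ Top, q i :=
          Finset.sum_congr rfl fun k hk => (main k (hmem k hk)).2.2
      _ = K * ∑ i ∈ Top, q i := by rw [Finset.sum_const, hcardIcc, nsmul_eq_mul]
end
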